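/- arXiv:2312.14256 — 4 statements merged into one kernel-verified Lean document; each statement's English description precedes it below -/
import Mathlib

section
/- The Condorcet-Plurality voting method CP violates positive involvement: there exist a three-alternative profile P, an alternative x ∈ CP(P), and a profile P' obtained from P by adding one new voter who ranks x uniquely first, such that x ∉ CP(P'). -/
/-!
Formalization of notions from "An extension of May's Theorem to three
alternatives: axiomatizing Minimax voting" by Holliday and Pacuit.

The set of voters is the countably infinite set `ℕ`; the set `α` of
alternatives is a type (assumed to have at least three elements where the
paper assumes `|𝒳| ≥ 3`).
-/

namespace MayMinimax

/-- A profile: a finite set of voters drawn from the countably infinite set `ℕ`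
of all voters, a finite set of alternatives, and, for each voter, a binary
relation on alternatives given as a Boolean-valued function:
`P.rel i a b = true` means that voter `i` ranks `a` above `b`. -/
structure Profile (α : Type*) where
  voters : Finset ℕ
  alts : Finset α
  rel : ℕ → α → α → Bool

variable {α : Type*} [DecidableEq α]

/-- Each voter's ballot is a strict weak order (asymmetric and negatively
transitive) on the alternatives. -/
def IsSWO (P : Profile α) : Prop :=
  ∀ i ∈ P.voters,
    (∀ a ∈ P.alts, ∀ b ∈ P.alts, P.rel i a b = true → P.rel i b a = false) ∧
    (∀ a ∈ P.alts, ∀ b ∈ P.alts, ∀ c ∈ P.alts,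
      P.rel i a b = false → P.rel i b c = false → P.rel i a c = false)

/-- The margin of `a` over `b` in `P`: the number of voters ranking `a` above
`b` minus the number of voters ranking `b` above `a`. -/
def Margin (P : Profile α) (a b : α) : ℤ :=
  ((P.voters.filter fun i => P.rel i a b = true).card : ℤ) -
    ((P.voters.filter fun i => P.rel i b a = true).card : ℤ)

/-- The number of voters ranking `a` above `b` in `P`. -/
def Support (P : Profile α) (a b : α) : ℕ :=
  (P.voters.filter fun i => P.rel i a b = true).card

/-- The Minimax score of `a`: the maximum margin of any other alternative over `a`. -/
def MMScore (P : Profile α) (a : α) : ℤ :=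
  WithBot.unbotD 0 (((P.alts.erase a).image fun b => Margin P b a).max)

/-- The set of Minimax winners: alternatives with minimal Minimax score. -/
def Minimax (P : Profile α) : Finset α :=
  P.alts.filter fun a => ∀ b ∈ P.alts, MMScore P a ≤ MMScore P b

/-- Restriction of a profile to a subset `Y` of the alternatives. -/
def Profile.restrict (P : Profile α) (Y : Finset α) : Profile α where
  voters := P.voters
  alts := Y
  rel := fun i a b => P.rel i a b && decide (a ∈ Y) && decide (b ∈ Y)

/-- `P.minus b` is `P` restricted to `X(P) \ {b}`. -/
def Profile.minus (P : Profile α) (b : α) : Profile α :=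
  P.restrict (P.alts.erase b)

/-- The combination `P + Q` of two profiles (used with disjoint voter sets and
the same set of alternatives). -/
def Profile.combine (P Q : Profile α) : Profile α where
  voters := P.voters ∪ Q.voters
  alts := P.alts
  rel := fun i a b => if i ∈ P.voters then P.rel i a b else Q.rel i a b

/-- `2P`: the profile `P` together with a copy of `P` on a disjoint set of voters. -/
def Profile.double (P : Profile α) : Profile α where
  voters := P.voters ∪ P.voters.image fun i => i + (P.voters.sup id + 1)
  alts := P.alts
  rel := fun i a b =>
    if i ∈ P.voters then P.rel i a b else P.rel (i - (P.voters.sup id + 1)) a b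

/-- `r` is (the strict part of) a linear order on the finite set `X`. -/
def IsLinearOn (r : α → α → Bool) (X : Finset α) : Prop :=
  (∀ a ∈ X, r a a = false) ∧
  (∀ a ∈ X, ∀ b ∈ X, ∀ c ∈ X, r a b = true → r b c = true → r a c = true) ∧
  (∀ a ∈ X, ∀ b ∈ X, a ≠ b → (r a b = true ∨ r b a = true)) ∧
  (∀ a ∈ X, ∀ b ∈ X, r a b = true → r b a = false)

/-- `Q` is a block profile for the set `X` of alternatives: it contains, for
each linear order of `X`, exactly one voter submitting that linear order, and
no other voters. -/
def IsBlock (X : Finset α) (Q : Profile α) : Prop :=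
  Q.alts = X ∧
  (∀ i ∈ Q.voters, IsLinearOn (Q.rel i) X) ∧
  (∀ r : α → α → Bool, IsLinearOn r X →
    ∃! i, i ∈ Q.voters ∧ ∀ a ∈ X, ∀ b ∈ X, Q.rel i a b = r a b)

/-- `P'` is obtained from `P` by one voter who ranked `a` uniquely last in `P`
switching to ranking `a` uniquely first in `P'`, with the restriction of that
voter's relation to `X(P) \ {a}` unchanged and all other voters' relations
unchanged. -/
def MoveLastToFirst (P P' : Profile α) (a : α) : Prop :=
  P'.voters = P.voters ∧ P'.alts = P.alts ∧ a ∈ P.alts ∧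
  ∃ i ∈ P.voters,
    (∀ b ∈ P.alts, b ≠ a → P.rel i b a = true) ∧
    (∀ b ∈ P.alts, b ≠ a → P'.rel i a b = true) ∧
    (∀ b ∈ P.alts, b ≠ a → ∀ c ∈ P.alts, c ≠ a → P'.rel i b c = P.rel i b c) ∧
    (∀ j ∈ P.voters, j ≠ i → ∀ x ∈ P.alts, ∀ y ∈ P.alts, P'.rel j x y = P.rel j x y)

/-- `P'` is obtained from `P` by adding one new voter who ranks `a` uniquely
first, all old voters' relations being unchanged. -/
def AddTopVoter (P P' : Profile α) (a : α) : Prop :=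
  P'.alts = P.alts ∧
  ∃ j, j ∉ P.voters ∧ P'.voters = insert j P.voters ∧
    (∀ b ∈ P.alts, b ≠ a → P'.rel j a b = true) ∧
    (∀ i ∈ P.voters, ∀ x ∈ P.alts, ∀ y ∈ P.alts, P'.rel i x y = P.rel i x y)

/-- `P'` is obtained from `P` by one voter improving the position of `a` in
their ballot, while nothing else changes. -/
def ImproveFor (P P' : Profile α) (a : α) : Prop :=
  P'.voters = P.voters ∧ P'.alts = P.alts ∧
  ∃ i ∈ P.voters,
    (∃ b ∈ P.alts, b ≠ a ∧
      ((P.rel i a b = false ∧ P'.rel i a b = true) ∨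
        (P.rel i b a = true ∧ P'.rel i b a = false))) ∧
    (∀ c ∈ P.alts, c ≠ a →
      (P.rel i a c = true → P'.rel i a c = true) ∧
      (P.rel i c a = false → P'.rel i c a = false)) ∧
    (∀ c ∈ P.alts, c ≠ a → ∀ d ∈ P.alts, d ≠ a → P'.rel i c d = P.rel i c d) ∧
    (∀ j ∈ P.voters, j ≠ i → ∀ x ∈ P.alts, ∀ y ∈ P.alts, P'.rel j x y = P.rel j x y)

/-- Anonymity relative to a domain `D` of profiles. -/
def Anonymity (D : Set (Profile α)) (F : Profile α → Finset α) : Prop :=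
  ∀ P ∈ D, ∀ P' ∈ D, P.alts = P'.alts →
    (∃ π : Equiv.Perm ℕ, P.voters.image π = P'.voters ∧
      ∀ i ∈ P.voters, ∀ a ∈ P.alts, ∀ b ∈ P.alts, P.rel i a b = P'.rel (π i) a b) →
    F P = F P'

/-- Neutrality relative to a domain `D` of profiles. -/
def Neutrality (D : Set (Profile α)) (F : Profile α → Finset α) : Prop :=
  ∀ P ∈ D, ∀ P' ∈ D, P.voters = P'.voters →
    ∀ τ : Equiv.Perm α, P.alts.image τ = P'.alts →
      (∀ i ∈ P.voters, ∀ a ∈ P.alts, ∀ b ∈ P.alts, P.rel i a b = P'.rel i (τ a) (τ b)) →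
      (F P).image τ = F P'

/-- Weak positive responsiveness relative to a domain `D` of profiles. -/
def WeakPositiveResponsiveness (D : Set (Profile α)) (F : Profile α → Finset α) : Prop :=
  ∀ P ∈ D, ∀ P' ∈ D, ∀ a ∈ F P, MoveLastToFirst P P' a → F P' = {a}

/-- (Full) positive responsiveness relative to a domain `D` of profiles. -/
def PositiveResponsiveness (D : Set (Profile α)) (F : Profile α → Finset α) : Prop :=
  ∀ P ∈ D, ∀ P' ∈ D, ∀ a ∈ F P, ImproveFor P P' a → F P' = {a}

/-- Positive involvement relative to a domain `D` of profiles. -/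
def PositiveInvolvement (D : Set (Profile α)) (F : Profile α → Finset α) : Prop :=
  ∀ P ∈ D, ∀ P' ∈ D, ∀ a ∈ F P, AddTopVoter P P' a → a ∈ F P'

/-- Near immunity to spoilers relative to a domain `D` of profiles. -/
def NearImmunityToSpoilers (D : Set (Profile α)) (F : Profile α → Finset α) : Prop :=
  ∀ P ∈ D, ∀ a ∈ P.alts, ∀ b ∈ P.alts,
    P.minus b ∈ D → P.restrict {a, b} ∈ D →
    F (P.minus b) = {a} → F (P.restrict {a, b}) = {a} → b ∉ F P → a ∈ F P

/-- Immunity to spoilers relative to a domain `D` of profiles. -/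
def ImmunityToSpoilers (D : Set (Profile α)) (F : Profile α → Finset α) : Prop :=
  ∀ P ∈ D, ∀ a ∈ P.alts, ∀ b ∈ P.alts,
    P.minus b ∈ D → P.restrict {a, b} ∈ D →
    a ∈ F (P.minus b) → F (P.restrict {a, b}) = {a} → b ∉ F P → a ∈ F P

/-- (Inclusion) homogeneity relative to a domain `D` of profiles. -/
def Homogeneity (D : Set (Profile α)) (F : Profile α → Finset α) : Prop :=
  ∀ P ∈ D, P.double ∈ D ∧ F P ⊆ F P.double

/-- Block preservation relative to a domain `D` of profiles. -/
def BlockPreservation (D : Set (Profile α)) (F : Profile α → Finset α) : Prop :=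
  ∀ P ∈ D, ∀ Q ∈ D, Disjoint P.voters Q.voters → IsBlock P.alts Q →
    P.combine Q ∈ D ∧ F P ⊆ F (P.combine Q)

/-- Condorcet consistency relative to a domain `D` of profiles. -/
def CondorcetConsistent (D : Set (Profile α)) (F : Profile α → Finset α) : Prop :=
  ∀ P ∈ D, ∀ c ∈ P.alts, (∀ x ∈ P.alts, x ≠ c → 0 < Margin P c x) → F P = {c}

/-- The domain of all (strict-weak-order) profiles with exactly two alternatives. -/
def Dom2 (α : Type*) : Set (Profile α) :=
  {P | IsSWO P ∧ P.voters.Nonempty ∧ P.alts.card = 2}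

/-- The domain of all profiles with two or three alternatives. -/
def Dom23 (α : Type*) : Set (Profile α) :=
  {P | IsSWO P ∧ P.voters.Nonempty ∧ (P.alts.card = 2 ∨ P.alts.card = 3)}

/-- The domain of all profiles with at least two alternatives. -/
def DomGe2 (α : Type*) : Set (Profile α) :=
  {P | IsSWO P ∧ P.voters.Nonempty ∧ 2 ≤ P.alts.card}

/-- The domain of all profiles. -/
def DomAll (α : Type*) : Set (Profile α) :=
  {P | IsSWO P ∧ P.voters.Nonempty ∧ P.alts.Nonempty}

/-- The support-based Minimax score of `a`: the maximum of `Support P b a`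
over all `b` with a positive margin over `a` (`0` if there is no such `b`). -/
def SupportMMScore (P : Profile α) (a : α) : ℕ :=
  WithBot.unbotD 0 ((((P.alts.erase a).filter fun b => 0 < Margin P b a).image fun b =>
    Support P b a).max)

/-- Support-based Minimax: alternatives with minimal support-based Minimax score. -/
def SupportMinimax (P : Profile α) : Finset α :=
  P.alts.filter fun a => ∀ b ∈ P.alts, SupportMMScore P a ≤ SupportMMScore P b

/-- The set of weak Condorcet winners in `P`. -/
def WeakCondorcetWinners (P : Profile α) : Finset α :=
  P.alts.filter fun a => ∀ x ∈ P.alts, 0 ≤ Margin P a x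

/-- The plurality score of `a`: the number of voters ranking `a` uniquely first. -/
def PluralityScore (P : Profile α) (a : α) : ℕ :=
  (P.voters.filter fun i => ∀ b ∈ P.alts, b ≠ a → P.rel i a b = true).card

/-- The Condorcet-Plurality voting method: the weak Condorcet winners if there
are any; otherwise the alternatives with maximal plurality score. -/
def CP (P : Profile α) : Finset α :=
  if (WeakCondorcetWinners P).Nonempty then WeakCondorcetWinners P
  else P.alts.filter fun a => ∀ b ∈ P.alts, PluralityScore P b ≤ PluralityScore P a

/-- The marginal Borda score of `a`: the sum of the margins of `a` over the
alternatives. -/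
def MarginalBorda (P : Profile α) (a : α) : ℤ :=
  ∑ b ∈ P.alts, Margin P a b

/-- Minimax MB: the Minimax winners with greatest marginal Borda score. -/
def MinimaxMB (P : Profile α) : Finset α :=
  (Minimax P).filter fun a => ∀ b ∈ Minimax P, MarginalBorda P b ≤ MarginalBorda P a

/-- `P` and `P'` have the same ordinal margin graph. -/
def SameOrdinalMarginGraph (P P' : Profile α) : Prop :=
  P.alts = P'.alts ∧
  (∀ a ∈ P.alts, ∀ b ∈ P.alts, (0 < Margin P a b ↔ 0 < Margin P' a b)) ∧
  (∀ a ∈ P.alts, ∀ b ∈ P.alts, ∀ c ∈ P.alts, ∀ d ∈ P.alts,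
    (Margin P c d ≤ Margin P a b ↔ Margin P' c d ≤ Margin P' a b))

/-- Ordinal margin invariance relative to a domain `D` of profiles. -/
def OrdinalMarginInvariance (D : Set (Profile α)) (F : Profile α → Finset α) : Prop :=
  ∀ P ∈ D, ∀ P' ∈ D, SameOrdinalMarginGraph P P' → F P = F P'

/-- `P` is uniquely-weighted: distinct pairs of distinct alternatives have
distinct margins. -/
def UniquelyWeighted (P : Profile α) : Prop :=
  ∀ a ∈ P.alts, ∀ b ∈ P.alts, ∀ c ∈ P.alts, ∀ d ∈ P.alts,
    a ≠ b → c ≠ d → (a, b) ≠ (c, d) → Margin P a b ≠ Margin P c d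

/-! ### Auxiliary material for `cp_violates_positive_involvement` -/

/-- The ballot table for the counterexample: `(i, p, q)` is in the list iff
voter `i` ranks alternative number `p` above alternative number `q`. -/
def cpTbl : List (ℕ × ℕ × ℕ) :=
  [(0,0,1),(0,0,2),
   (1,0,1),(1,0,2),(1,1,2),
   (2,0,1),(2,2,0),(2,2,1),
   (3,0,1),(3,2,0),(3,2,1),
   (4,1,0),(4,1,2),(4,2,0),
   (5,1,0),(5,1,2),(5,2,0),
   (6,0,1),(6,0,2),(6,2,1)]

/-- The numeric ballots of the counterexample. -/
def cpR (i p q : ℕ) : Bool := decide ((i, p, q) ∈ cpTbl)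

/-- Encode the three alternatives numerically. -/
def cpIdx (x y z a : α) : ℕ := if a = x then 0 else if a = y then 1 else 2

/-- The counterexample profile with 6 voters. -/
def cpP (x y z : α) : Profile α :=
  ⟨Finset.range 6, {x, y, z}, fun i a b => cpR i (cpIdx x y z a) (cpIdx x y z b)⟩

/-- The counterexample profile with the added 7th voter. -/
def cpP' (x y z : α) : Profile α :=
  ⟨Finset.range 7, {x, y, z}, fun i a b => cpR i (cpIdx x y z a) (cpIdx x y z b)⟩

lemma cpIdx_lt (x y z a : α) : cpIdx x y z a < 3 := by
  unfold cpIdx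
  split
  · norm_num
  · split <;> norm_num

lemma margin_helper (V : Finset ℕ) (A : Finset α) (R : ℕ → α → α → Bool) (a b : α)
    (p q : ℕ → Bool)
    (hp : ∀ i ∈ V, R i a b = p i) (hq : ∀ i ∈ V, R i b a = q i) (v : ℤ)
    (hv : (((V.filter fun i => p i = true).card : ℤ) -
      ((V.filter fun i => q i = true).card : ℤ)) = v) :
    Margin (⟨V, A, R⟩ : Profile α) a b = v := by
  unfold Margin
  rw [Finset.filter_congr (fun i hi => by rw [hp i hi] :
        ∀ i ∈ V, (R i a b = true) ↔ (p i = true)),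
      Finset.filter_congr (fun i hi => by rw [hq i hi] :
        ∀ i ∈ V, (R i b a = true) ↔ (q i = true))]
  exact hv

lemma plur_helper (V : Finset ℕ) (A : Finset α) (R : ℕ → α → α → Bool) (a : α)
    (p : ℕ → Bool)
    (hp : ∀ i ∈ V, ((∀ b ∈ A, b ≠ a → R i a b = true) ↔ p i = true)) (n : ℕ)
    (hn : (V.filter fun i => p i = true).card = n) :
    PluralityScore (⟨V, A, R⟩ : Profile α) a = n := by
  unfold PluralityScore
  rw [Finset.filter_congr hp]
  exact hn
/-- Condorcet-Plurality violates positive involvement: there are a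
three-alternative profile `P`, an alternative `x ∈ CP(P)`, and a profile `P'`
obtained from `P` by adding one new voter ranking `x` uniquely first, such
that `x ∉ CP(P')`. -/
theorem cp_violates_positive_involvement {α : Type*} [DecidableEq α]
    (hX : ∃ x y z : α, x ≠ y ∧ x ≠ z ∧ y ≠ z) :
    ∃ (P P' : Profile α) (x : α),
      IsSWO P ∧ P.voters.Nonempty ∧ P.alts.card = 3 ∧ IsSWO P' ∧
      x ∈ CP P ∧ AddTopVoter P P' x ∧ x ∉ CP P' := by
  obtain ⟨x, y, z, hxy, hxz, hyz⟩ := hX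
  have hyx : y ≠ x := hxy.symm
  have hzx : z ≠ x := hxz.symm
  have hzy : z ≠ y := hyz.symm
  have hix : cpIdx x y z x = 0 := by simp [cpIdx]
  have hiy : cpIdx x y z y = 1 := by simp [cpIdx, hyx]
  have hiz : cpIdx x y z z = 2 := by simp [cpIdx, hzx, hzy]
  have hxA : x ∈ ({x, y, z} : Finset α) := by simp
  have hyA : y ∈ ({x, y, z} : Finset α) := by simp
  have hzA : z ∈ ({x, y, z} : Finset α) := by simp
  have memA : ∀ a : α, a ∈ ({x, y, z} : Finset α) → a = x ∨ a = y ∨ a = z := by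
    intro a ha; simpa using ha
  -- both profiles consist of strict weak orders
  have hswo : ∀ (V : Finset ℕ), V ⊆ Finset.range 7 →
      IsSWO (⟨V, {x, y, z}, fun i a b => cpR i (cpIdx x y z a) (cpIdx x y z b)⟩ :
        Profile α) := by
    intro V hV
    have hasym : ∀ (i : Fin 7) (p q : Fin 3), cpR i p q = true → cpR i q p = false := by
      decide
    have htr : ∀ (i : Fin 7) (p q r : Fin 3),
        cpR i p q = false → cpR i q r = false → cpR i p r = false := by decide
    intro i hi
    have hi7 : i < 7 := Finset.mem_range.mp (hV hi)
    constructor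
    · intro a _ b _ h
      exact hasym ⟨i, hi7⟩ ⟨_, cpIdx_lt x y z a⟩ ⟨_, cpIdx_lt x y z b⟩ h
    · intro a _ b _ c _ h1 h2
      exact htr ⟨i, hi7⟩ ⟨_, cpIdx_lt x y z a⟩ ⟨_, cpIdx_lt x y z b⟩ ⟨_, cpIdx_lt x y z c⟩ h1 h2
  -- margins in P
  have hMxz : Margin (cpP x y z) x z = -2 :=
    margin_helper _ _ _ _ _ (fun i => cpR i 0 2) (fun i => cpR i 2 0)
      (fun i _ => by simp only [hix, hiz]) (fun i _ => by simp only [hix, hiz]) _ (by decide)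
  have hMyx : Margin (cpP x y z) y x = -2 :=
    margin_helper _ _ _ _ _ (fun i => cpR i 1 0) (fun i => cpR i 0 1)
      (fun i _ => by simp only [hix, hiy]) (fun i _ => by simp only [hix, hiy]) _ (by decide)
  have hMzy : Margin (cpP x y z) z y = -1 :=
    margin_helper _ _ _ _ _ (fun i => cpR i 2 1) (fun i => cpR i 1 2)
      (fun i _ => by simp only [hiy, hiz]) (fun i _ => by simp only [hiy, hiz]) _ (by decide)
  -- margins in P'
  have hMzx' : Margin (cpP' x y z) z x = 1 :=
    margin_helper _ _ _ _ _ (fun i => cpR i 2 0) (fun i => cpR i 0 2)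
      (fun i _ => by simp only [hix, hiz]) (fun i _ => by simp only [hix, hiz]) _ (by decide)
  have hMzy' : Margin (cpP' x y z) z y = 0 :=
    margin_helper _ _ _ _ _ (fun i => cpR i 2 1) (fun i => cpR i 1 2)
      (fun i _ => by simp only [hiy, hiz]) (fun i _ => by simp only [hiy, hiz]) _ (by decide)
  have hMzz' : Margin (cpP' x y z) z z = 0 :=
    margin_helper _ _ _ _ _ (fun i => cpR i 2 2) (fun i => cpR i 2 2)
      (fun i _ => by simp only [hiz]) (fun i _ => by simp only [hiz]) _ (by decide)
  have hMxz' : Margin (cpP' x y z) x z = -1 :=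
    margin_helper _ _ _ _ _ (fun i => cpR i 0 2) (fun i => cpR i 2 0)
      (fun i _ => by simp only [hix, hiz]) (fun i _ => by simp only [hix, hiz]) _ (by decide)
  -- plurality scores in P
  have hpx : PluralityScore (cpP x y z) x = 2 := by
    refine plur_helper (Finset.range 6) {x, y, z} _ x
      (fun i => cpR i 0 1 && cpR i 0 2) ?_ 2 (by decide)
    intro i _
    constructor
    · intro h
      have h1 := h y hyA hyx
      have h2 := h z hzA hzx
      simp only [hix, hiy] at h1
      simp only [hix, hiz] at h2
      rw [Bool.and_eq_true]; exact ⟨h1, h2⟩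
    · intro h b hb hbx
      rw [Bool.and_eq_true] at h
      rcases memA b hb with rfl | rfl | rfl
      · exact absurd rfl hbx
      · simp only [hix, hiy]; exact h.1
      · simp only [hix, hiz]; exact h.2
  have hpy : PluralityScore (cpP x y z) y = 2 := by
    refine plur_helper (Finset.range 6) {x, y, z} _ y
      (fun i => cpR i 1 0 && cpR i 1 2) ?_ 2 (by decide)
    intro i _
    constructor
    · intro h
      have h1 := h x hxA hxy
      have h2 := h z hzA hzy
      simp only [hix, hiy] at h1
      simp only [hiy, hiz] at h2
      rw [Bool.and_eq_true]; exact ⟨h1, h2⟩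
    · intro h b hb hbx
      rw [Bool.and_eq_true] at h
      rcases memA b hb with rfl | rfl | rfl
      · simp only [hix, hiy]; exact h.1
      · exact absurd rfl hbx
      · simp only [hiy, hiz]; exact h.2
  have hpz : PluralityScore (cpP x y z) z = 2 := by
    refine plur_helper (Finset.range 6) {x, y, z} _ z
      (fun i => cpR i 2 0 && cpR i 2 1) ?_ 2 (by decide)
    intro i _
    constructor
    · intro h
      have h1 := h x hxA hxz
      have h2 := h y hyA hyz
      simp only [hix, hiz] at h1
      simp only [hiy, hiz] at h2
      rw [Bool.and_eq_true]; exact ⟨h1, h2⟩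
    · intro h b hb hbx
      rw [Bool.and_eq_true] at h
      rcases memA b hb with rfl | rfl | rfl
      · simp only [hix, hiz]; exact h.1
      · simp only [hiy, hiz]; exact h.2
      · exact absurd rfl hbx
  -- no weak Condorcet winner in P
  have hnoW : ¬ (WeakCondorcetWinners (cpP x y z)).Nonempty := by
    rintro ⟨a, ha⟩
    unfold WeakCondorcetWinners at ha
    rw [Finset.mem_filter] at ha
    obtain ⟨haA, hge⟩ := ha
    rcases memA a haA with rfl | rfl | rfl
    · have := hge z hzA; rw [hMxz] at this; omega
    · have := hge x hxA; rw [hMyx] at this; omega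
    · have := hge y hyA; rw [hMzy] at this; omega
  -- z is a weak Condorcet winner in P'
  have hW' : (WeakCondorcetWinners (cpP' x y z)).Nonempty := by
    refine ⟨z, ?_⟩
    unfold WeakCondorcetWinners
    rw [Finset.mem_filter]
    refine ⟨hzA, ?_⟩
    intro b hb
    rcases memA b hb with rfl | rfl | rfl
    · rw [hMzx']; norm_num
    · rw [hMzy']
    · rw [hMzz']
  refine ⟨cpP x y z, cpP' x y z, x, ?_, ⟨0, by simp [cpP]⟩, ?_, ?_, ?_, ?_, ?_⟩
  · exact hswo _ (Finset.range_subset_range.mpr (by norm_num))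
  · show ({x, y, z} : Finset α).card = 3
    rw [Finset.card_insert_of_notMem (by simp [hxy, hxz]),
      Finset.card_insert_of_notMem (by simp [hyz]), Finset.card_singleton]
  · exact hswo _ (Finset.range_subset.mpr (by norm_num))
  · -- x ∈ CP P
    unfold CP
    rw [if_neg hnoW, Finset.mem_filter]
    refine ⟨hxA, ?_⟩
    intro b hb
    rcases memA b hb with rfl | rfl | rfl
    · exact le_refl _
    · rw [hpy, hpx]
    · rw [hpz, hpx]
  · -- AddTopVoter
    refine ⟨rfl, 6, by simp [cpP], Finset.range_add_one, ?_, ?_⟩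
    · intro b hb hbx
      rcases memA b hb with rfl | rfl | rfl
      · exact absurd rfl hbx
      · simp only [cpP', hix, hiy]; decide
      · simp only [cpP', hix, hiz]; decide
    · intro i _ a _ b _; rfl
  · -- x ∉ CP P'
    intro hx
    unfold CP at hx
    rw [if_pos hW'] at hx
    unfold WeakCondorcetWinners at hx
    rw [Finset.mem_filter] at hx
    have := hx.2 z hzA
    rw [hMxz'] at this
    omega

end MayMinimax
end

section
/- The Condorcet-Plurality voting method CP, defined on all profiles, satisfies weak positive responsiveness: if a ∈ CP(P) and P' is obtained from P by one voter who ranked a uniquely last in P switching to ranking a uniquely first in P', otherwise keeping their ranking the same, then CP(P') = {a}. -/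
/-!
Formalization of notions from "An extension of May's Theorem to three
alternatives: axiomatizing Minimax voting" by Holliday and Pacuit.

The set of voters is the countably infinite set `ℕ`; the set `α` of
alternatives is a type (assumed to have at least three elements where the
paper assumes `|𝒳| ≥ 3`).
-/

namespace MayMinimax

variable {α : Type*} [DecidableEq α]

lemma margin_neg' (P : Profile α) (a b : α) : Margin P b a = -Margin P a b := by
  unfold Margin; ring

lemma margin_self' (P : Profile α) (a : α) : Margin P a a = 0 := by
  unfold Margin; ring

/-- Condorcet-Plurality, defined on all profiles, satisfies weak positive
responsiveness. -/
theorem cp_weak_positive_responsiveness {α : Type*} [DecidableEq α]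
    (hX : ∃ x y z : α, x ≠ y ∧ x ≠ z ∧ y ≠ z) :
    ∀ P P' : Profile α, IsSWO P → P.voters.Nonempty → P.alts.Nonempty →
      IsSWO P' →
      ∀ a ∈ CP P, MoveLastToFirst P P' a → CP P' = {a} := by
  clear hX
  intro P P' hSWO hvne hane hSWO' a haCP hmove
  obtain ⟨hvv, haa, haX, i, hi, hlast, hfirst, hkeep, hothers⟩ := hmove
  -- basic asymmetry facts
  have hasymP : ∀ b ∈ P.alts, b ≠ a → P.rel i a b = false := by
    intro b hb hba
    exact (hSWO i hi).1 b hb a haX (hlast b hb hba)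
  have hi' : i ∈ P'.voters := by rw [hvv]; exact hi
  have hasymP' : ∀ b ∈ P.alts, b ≠ a → P'.rel i b a = false := by
    intro b hb hba
    exact (hSWO' i hi').1 a (by rw [haa]; exact haX) b (by rw [haa]; exact hb)
      (hfirst b hb hba)
  -- margin changes
  have hfila : ∀ b ∈ P.alts, b ≠ a →
      (P'.voters.filter fun j => P'.rel j a b = true)
        = insert i (P.voters.filter fun j => P.rel j a b = true) := by
    intro b hb hba
    ext j
    simp only [Finset.mem_filter, Finset.mem_insert, hvv]
    constructor
    · rintro ⟨hjv, hr⟩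
      by_cases hji : j = i
      · exact Or.inl hji
      · exact Or.inr ⟨hjv, by rw [← hothers j hjv hji a haX b hb]; exact hr⟩
    · rintro (rfl | ⟨hjv, hr⟩)
      · exact ⟨hi, hfirst b hb hba⟩
      · by_cases hji : j = i
        · subst hji; exact ⟨hi, hfirst b hb hba⟩
        · exact ⟨hjv, by rw [hothers j hjv hji a haX b hb]; exact hr⟩
  have hfilb : ∀ b ∈ P.alts, b ≠ a →
      (P'.voters.filter fun j => P'.rel j b a = true)
        = (P.voters.filter fun j => P.rel j b a = true).erase i := by
    intro b hb hba
    ext j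
    simp only [Finset.mem_filter, Finset.mem_erase, hvv]
    constructor
    · rintro ⟨hjv, hr⟩
      have hji : j ≠ i := by
        rintro rfl
        rw [hasymP' b hb hba] at hr
        exact Bool.false_ne_true hr
      exact ⟨hji, hjv, by rw [← hothers j hjv hji b hb a haX]; exact hr⟩
    · rintro ⟨hji, hjv, hr⟩
      exact ⟨hjv, by rw [hothers j hjv hji b hb a haX]; exact hr⟩
  have hMab : ∀ b ∈ P.alts, b ≠ a → Margin P' a b = Margin P a b + 2 := by
    intro b hb hba
    unfold Margin
    rw [hfila b hb hba, hfilb b hb hba]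
    have hnotmem : i ∉ P.voters.filter fun j => P.rel j a b = true := by
      simp [hasymP b hb hba]
    have hmem : i ∈ P.voters.filter fun j => P.rel j b a = true := by
      simp [hi, hlast b hb hba]
    rw [Finset.card_insert_of_notMem hnotmem,
      Finset.card_erase_of_mem hmem]
    have hpos : 1 ≤ (P.voters.filter fun j => P.rel j b a = true).card :=
      Finset.card_pos.2 ⟨i, hmem⟩
    rw [Nat.cast_sub hpos]
    push_cast
    ring
  have hMbc : ∀ b ∈ P.alts, b ≠ a → ∀ c ∈ P.alts, c ≠ a →
      Margin P' b c = Margin P b c := by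
    intro b hb hba c hc hca
    unfold Margin
    have hfil : ∀ (x : α), x ∈ P.alts → x ≠ a → ∀ (y : α), y ∈ P.alts → y ≠ a →
        (P'.voters.filter fun j => P'.rel j x y = true)
          = P.voters.filter fun j => P.rel j x y = true := by
      intro x hx hxa y hy hya
      ext j
      simp only [Finset.mem_filter, hvv]
      constructor
      · rintro ⟨hjv, hr⟩
        refine ⟨hjv, ?_⟩
        by_cases hji : j = i
        · subst hji; rw [← hkeep x hx hxa y hy hya]; exact hr
        · rw [← hothers j hjv hji x hx y hy]; exact hr
      · rintro ⟨hjv, hr⟩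
        refine ⟨hjv, ?_⟩
        by_cases hji : j = i
        · subst hji; rw [hkeep x hx hxa y hy hya]; exact hr
        · rw [hothers j hjv hji x hx y hy]; exact hr
    rw [hfil b hb hba c hc hca, hfil c hc hca b hb hba]
  by_cases hW : (WeakCondorcetWinners P).Nonempty
  · -- Condorcet case
    rw [CP, if_pos hW] at haCP
    obtain ⟨-, hwin⟩ := Finset.mem_filter.1 haCP
    have hstrict : ∀ x ∈ P.alts, x ≠ a → 0 < Margin P' a x := by
      intro x hx hxa
      have := hwin x hx
      rw [hMab x hx hxa]
      linarith
    have hWCW' : WeakCondorcetWinners P' = {a} := by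
      ext c
      simp only [WeakCondorcetWinners, Finset.mem_filter, Finset.mem_singleton, haa]
      constructor
      · rintro ⟨hcX, hcond⟩
        by_contra hca
        have h1 := hcond a haX
        have h2 := hstrict c hcX hca
        have h3 := margin_neg' P' a c
        linarith
      · intro hc
        rw [hc]
        refine ⟨haX, fun x hx => ?_⟩
        by_cases hxa : x = a
        · rw [hxa, margin_self']
        · exact le_of_lt (hstrict x hx hxa)
    rw [CP, if_pos (hWCW' ▸ Finset.singleton_nonempty a), hWCW']
  · -- plurality case
    rw [CP, if_neg hW] at haCP
    obtain ⟨-, hmax⟩ := Finset.mem_filter.1 haCP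
    have hb0 : ∃ b ∈ P.alts, b ≠ a := by
      by_contra h
      push_neg at h
      refine hW ⟨a, Finset.mem_filter.2 ⟨haX, fun x hx => ?_⟩⟩
      rw [h x hx, margin_self']
    obtain ⟨b0, hb0X, hb0a⟩ := hb0
    -- no weak Condorcet winner other than a in P'
    have hWCWsub : ∀ c ∈ WeakCondorcetWinners P', c = a := by
      intro c hc
      by_contra hca
      obtain ⟨hcX', hcond⟩ := Finset.mem_filter.1 hc
      have hcX : c ∈ P.alts := by rw [← haa]; exact hcX'
      refine hW ⟨c, Finset.mem_filter.2 ⟨hcX, fun x hx => ?_⟩⟩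
      by_cases hxa : x = a
      · rw [hxa]
        have h1 := hcond a (by rw [haa]; exact haX)
        have h2 := hMab c hcX hca
        have h3 := margin_neg' P' a c
        have h4 := margin_neg' P a c
        linarith
      · have h1 := hcond x (by rw [haa]; exact hx)
        rw [hMbc c hcX hca x hx hxa] at h1
        exact h1
    by_cases hW' : (WeakCondorcetWinners P').Nonempty
    · rw [CP, if_pos hW']
      obtain ⟨c0, hc0⟩ := hW'
      have hc0a := hWCWsub c0 hc0
      subst hc0a
      ext c
      simp only [Finset.mem_singleton]
      constructor
      · exact fun h => hWCWsub c h
      · rintro rfl; exact hc0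
    · rw [CP, if_neg hW']
      -- plurality scores
      have hPa : PluralityScore P' a = PluralityScore P a + 1 := by
        unfold PluralityScore
        have hfil : (P'.voters.filter fun j => ∀ b ∈ P'.alts, b ≠ a → P'.rel j a b = true)
            = insert i (P.voters.filter fun j => ∀ b ∈ P.alts, b ≠ a → P.rel j a b = true) := by
          ext j
          simp only [Finset.mem_filter, Finset.mem_insert, hvv, haa]
          constructor
          · rintro ⟨hjv, hcond⟩
            by_cases hji : j = i
            · exact Or.inl hji
            · exact Or.inr ⟨hjv, fun b hb hba => by
                rw [← hothers j hjv hji a haX b hb]; exact hcond b hb hba⟩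
          · rintro (rfl | ⟨hjv, hcond⟩)
            · exact ⟨hi, fun b hb hba => hfirst b hb hba⟩
            · by_cases hji : j = i
              · subst hji; exact ⟨hi, fun b hb hba => hfirst b hb hba⟩
              · exact ⟨hjv, fun b hb hba => by
                  rw [hothers j hjv hji a haX b hb]; exact hcond b hb hba⟩
        rw [hfil, Finset.card_insert_of_notMem]
        simp only [Finset.mem_filter, not_and]
        intro _ hcond
        have := hcond b0 hb0X hb0a
        rw [hasymP b0 hb0X hb0a] at this
        exact Bool.false_ne_true this
      have hPb : ∀ b ∈ P.alts, b ≠ a → PluralityScore P' b ≤ PluralityScore P b := by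
        intro b hb hba
        unfold PluralityScore
        apply Finset.card_le_card
        intro j hj
        obtain ⟨hjv', hcond⟩ := Finset.mem_filter.1 hj
        have hjv : j ∈ P.voters := by rw [← hvv]; exact hjv'
        refine Finset.mem_filter.2 ⟨hjv, fun c hc hcb => ?_⟩
        have hji : j ≠ i := by
          rintro rfl
          have := hcond a (by rw [haa]; exact haX) (Ne.symm hba)
          rw [hasymP' b hb hba] at this
          exact Bool.false_ne_true this
        rw [← hothers j hjv hji b hb c hc]
        exact hcond c (by rw [haa]; exact hc) hcb
      have hstrictPl : ∀ b ∈ P.alts, b ≠ a →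
          PluralityScore P' b < PluralityScore P' a := by
        intro b hb hba
        have h1 := hmax b hb
        have h2 := hPb b hb hba
        omega
      ext c
      simp only [Finset.mem_filter, Finset.mem_singleton, haa]
      constructor
      · rintro ⟨hcX, hcmax⟩
        by_contra hca
        have h1 := hcmax a haX
        have h2 := hstrictPl c hcX hca
        omega
      · intro hc
        rw [hc]
        refine ⟨haX, fun b hb => ?_⟩
        by_cases hba : b = a
        · rw [hba]
        · exact le_of_lt (hstrictPl b hb hba)

end MayMinimax
end

section
/- There exists a voting method F whose domain is the set of all profiles with two or three alternatives such that F satisfies anonymity, neutrality, weak positive responsiveness, positive involvement, near immunity to spoilers, and homogeneity, F violates block preservation, and there is a profile P in the domain with F(P) ≠ Minimax(P). -/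
/-!
Formalization of notions from "An extension of May's Theorem to three
alternatives: axiomatizing Minimax voting" by Holliday and Pacuit.

The set of voters is the countably infinite set `ℕ`; the set `α` of
alternatives is a type (assumed to have at least three elements where the
paper assumes `|𝒳| ≥ 3`).
-/

namespace MayMinimax

variable {α : Type*} [DecidableEq α]

/-! ### Auxiliary lemmas for the independence proof -/

set_option linter.unusedSectionVars false

section Aux

variable {P P' Q : Profile α} {a b c : α}

lemma margin_eq_support (P : Profile α) (a b : α) :
    Margin P a b = (Support P a b : ℤ) - (Support P b a : ℤ) := rfl

lemma margin_antisymm (P : Profile α) (a b : α) : Margin P a b = - Margin P b a := by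
  rw [margin_eq_support, margin_eq_support]; ring

lemma support_congr (hv : P.voters = P'.voters)
    (h : ∀ i ∈ P.voters, P.rel i a b = P'.rel i a b) :
    Support P a b = Support P' a b := by
  unfold Support
  rw [← hv]
  congr 1
  apply Finset.filter_congr
  intro i hi
  rw [h i hi]

lemma margin_congr (hv : P.voters = P'.voters)
    (h : ∀ i ∈ P.voters, ∀ x ∈ P.alts, ∀ y ∈ P.alts, P.rel i x y = P'.rel i x y)
    (ha : a ∈ P.alts) (hb : b ∈ P.alts) :
    Margin P a b = Margin P' a b := by
  rw [margin_eq_support, margin_eq_support,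
    support_congr hv (fun i hi => h i hi a ha b hb),
    support_congr hv (fun i hi => h i hi b hb a ha)]

lemma mmscore_spec (h : (P.alts.erase a).Nonempty) :
    (∃ b ∈ P.alts.erase a, MMScore P a = Margin P b a) ∧
    (∀ b ∈ P.alts.erase a, Margin P b a ≤ MMScore P a) := by
  obtain ⟨M, hM⟩ := Finset.max_of_nonempty (h.image (fun b => Margin P b a))
  have hMm : M ∈ (P.alts.erase a).image (fun b => Margin P b a) := Finset.mem_of_max hM
  obtain ⟨b, hb, hbe⟩ := Finset.mem_image.mp hMm
  have hsc : MMScore P a = M := by unfold MMScore; rw [hM]; rfl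
  constructor
  · exact ⟨b, hb, by rw [hsc, hbe]⟩
  · intro c hc
    have := Finset.le_max (Finset.mem_image_of_mem (fun b => Margin P b a) hc)
    rw [hM] at this
    rw [hsc]
    exact_mod_cast this

lemma le_mmscore (hb : b ∈ P.alts.erase a) : Margin P b a ≤ MMScore P a :=
  (mmscore_spec ⟨b, hb⟩).2 b hb

lemma mmscore_le_of_forall (hne : (P.alts.erase a).Nonempty) {t : ℤ}
    (h : ∀ b ∈ P.alts.erase a, Margin P b a ≤ t) : MMScore P a ≤ t := by
  obtain ⟨b, hb, hbe⟩ := (mmscore_spec hne).1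
  rw [hbe]; exact h b hb

lemma exists_mmscore (hne : (P.alts.erase a).Nonempty) :
    ∃ b ∈ P.alts.erase a, MMScore P a = Margin P b a := (mmscore_spec hne).1

lemma erase_nonempty_of_two_le (ha : a ∈ P.alts) (h2 : 2 ≤ P.alts.card) :
    (P.alts.erase a).Nonempty := by
  rw [← Finset.card_pos, Finset.card_erase_of_mem ha]
  omega

lemma mem_minimax (ha : a ∈ P.alts) (h : ∀ b ∈ P.alts, MMScore P a ≤ MMScore P b) :
    a ∈ Minimax P := Finset.mem_filter.mpr ⟨ha, h⟩

lemma minimax_subset (P : Profile α) : Minimax P ⊆ P.alts := Finset.filter_subset _ _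

lemma minimax_nonempty (h : P.alts.Nonempty) : (Minimax P).Nonempty := by
  obtain ⟨a, ha, hmin⟩ := Finset.exists_min_image P.alts (MMScore P) h
  exact ⟨a, mem_minimax ha hmin⟩


lemma mmscore_congr (halts : P.alts = P'.alts)
    (h : ∀ x ∈ P.alts, ∀ y ∈ P.alts, Margin P x y = Margin P' x y) (ha : a ∈ P.alts) :
    MMScore P a = MMScore P' a := by
  unfold MMScore
  rw [← halts]
  have himg : ((P.alts.erase a).image fun b => Margin P b a)
      = ((P.alts.erase a).image fun b => Margin P' b a) :=
    Finset.image_congr (fun b hb => h b (Finset.mem_of_mem_erase hb) a ha)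
  rw [himg]

/-- The deviant set: three alternatives forming a majority cycle with all
three margins equal. -/
def InS (P : Profile α) : Prop :=
  ∃ x y z : α, x ≠ y ∧ x ≠ z ∧ y ≠ z ∧ P.alts = {x, y, z} ∧
    0 < Margin P y x ∧ Margin P x z = Margin P y x ∧ Margin P z y = Margin P y x

/-- Support of `x` over those who beat `x`. -/
def qsup (P : Profile α) (x : α) : ℕ :=
  ∑ u ∈ (P.alts.erase x).filter (fun u => 0 < Margin P u x), Support P x u

/-- Parity tiebreak set. -/
def Tb (P : Profile α) : Finset α := P.alts.filter fun x => Even (qsup P x)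

open Classical in
/-- The deviant voting method. -/
noncomputable def Fd (P : Profile α) : Finset α :=
  if InS P then (if (Tb P).Nonempty then Tb P else P.alts) else Minimax P

lemma mem_of_mem_triple {x y z w : α} (hw : w ∈ ({x, y, z} : Finset α)) :
    w = x ∨ w = y ∨ w = z := by simpa using hw

lemma inS_score_eq (h : InS P) :
    ∀ p ∈ P.alts, ∀ q ∈ P.alts, MMScore P p = MMScore P q := by
  obtain ⟨x, y, z, hxy, hxz, hyz, hA, hm, h2, h3⟩ := h
  set m := Margin P y x with hmdef
  have hx : x ∈ P.alts := by rw [hA]; simp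
  have hy : y ∈ P.alts := by rw [hA]; simp
  have hz : z ∈ P.alts := by rw [hA]; simp
  have key : ∀ p ∈ P.alts, MMScore P p = m := by
    intro p hp
    rcases mem_of_mem_triple (hA ▸ hp) with rfl | rfl | rfl
    · -- p = x : beaten by y with margin m, beats z
      apply le_antisymm
      · apply mmscore_le_of_forall ⟨y, Finset.mem_erase.mpr ⟨hxy.symm, hy⟩⟩
        intro b hb
        rcases mem_of_mem_triple (hA ▸ Finset.mem_of_mem_erase hb) with rfl | rfl | rfl
        · exact absurd rfl (Finset.ne_of_mem_erase hb)
        · exact le_of_eq rfl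
        · rw [margin_antisymm, h2]; omega
      · exact le_mmscore (Finset.mem_erase.mpr ⟨hxy.symm, hy⟩)
    · apply le_antisymm
      · apply mmscore_le_of_forall ⟨z, Finset.mem_erase.mpr ⟨hyz.symm, hz⟩⟩
        intro b hb
        rcases mem_of_mem_triple (hA ▸ Finset.mem_of_mem_erase hb) with rfl | rfl | rfl
        · rw [margin_antisymm]; omega
        · exact absurd rfl (Finset.ne_of_mem_erase hb)
        · rw [h3]
      · rw [← h3]; exact le_mmscore (Finset.mem_erase.mpr ⟨hyz.symm, hz⟩)
    · apply le_antisymm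
      · apply mmscore_le_of_forall ⟨x, Finset.mem_erase.mpr ⟨hxz, hx⟩⟩
        intro b hb
        rcases mem_of_mem_triple (hA ▸ Finset.mem_of_mem_erase hb) with rfl | rfl | rfl
        · rw [h2]
        · rw [margin_antisymm, h3]; omega
        · exact absurd rfl (Finset.ne_of_mem_erase hb)
      · rw [← h2]; exact le_mmscore (Finset.mem_erase.mpr ⟨hxz, hx⟩)
  intro p hp q hq
  rw [key p hp, key q hq]

lemma minimax_of_inS (h : InS P) : Minimax P = P.alts := by
  apply Finset.filter_true_of_mem
  intro p hp b hb
  exact le_of_eq (inS_score_eq h p hp b hb)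

lemma Fd_subset_alts (P : Profile α) : Fd P ⊆ P.alts := by
  unfold Fd
  split_ifs with h1 h2
  · exact Finset.filter_subset _ _
  · exact Finset.Subset.refl _
  · exact minimax_subset P

lemma Fd_subset_minimax (P : Profile α) : Fd P ⊆ Minimax P := by
  unfold Fd
  split_ifs with h1 h2
  · rw [minimax_of_inS h1]; exact Finset.filter_subset _ _
  · rw [minimax_of_inS h1]
  · exact Finset.Subset.refl _

lemma Fd_nonempty (h : P.alts.Nonempty) : (Fd P).Nonempty := by
  unfold Fd
  split_ifs with h1 h2
  · exact h2
  · exact h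
  · exact minimax_nonempty h


lemma minimax_congr (halts : P.alts = P'.alts)
    (h : ∀ x ∈ P.alts, ∀ y ∈ P.alts, Margin P x y = Margin P' x y) :
    Minimax P = Minimax P' := by
  unfold Minimax
  rw [← halts]
  apply Finset.filter_congr
  intro x hx
  constructor
  · intro hc b hb
    rw [← mmscore_congr halts h hx, ← mmscore_congr halts h hb]
    exact hc b hb
  · intro hc b hb
    rw [mmscore_congr halts h hx, mmscore_congr halts h hb]
    exact hc b hb

lemma inS_congr (halts : P.alts = P'.alts)
    (h : ∀ x ∈ P.alts, ∀ y ∈ P.alts, Margin P x y = Margin P' x y) :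
    InS P → InS P' := by
  rintro ⟨x, y, z, hxy, hxz, hyz, hA, hm, h2, h3⟩
  have hx : x ∈ P.alts := by rw [hA]; simp
  have hy : y ∈ P.alts := by rw [hA]; simp
  have hz : z ∈ P.alts := by rw [hA]; simp
  exact ⟨x, y, z, hxy, hxz, hyz, halts ▸ hA,
    h y hy x hx ▸ hm, h x hx z hz ▸ h y hy x hx ▸ h2, h z hz y hy ▸ h y hy x hx ▸ h3⟩

lemma qsup_congr (halts : P.alts = P'.alts)
    (hm : ∀ x ∈ P.alts, ∀ y ∈ P.alts, Margin P x y = Margin P' x y)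
    (hs : ∀ x ∈ P.alts, ∀ y ∈ P.alts, Support P x y = Support P' x y)
    (ha : a ∈ P.alts) : qsup P a = qsup P' a := by
  unfold qsup
  rw [← halts]
  rw [Finset.filter_congr (fun u hu => by
    rw [hm u (Finset.mem_of_mem_erase hu) a ha])]
  apply Finset.sum_congr rfl
  intro u hu
  exact hs a ha u (Finset.mem_of_mem_erase (Finset.mem_of_mem_filter _ hu))

lemma Fd_congr (halts : P.alts = P'.alts)
    (hs : ∀ x ∈ P.alts, ∀ y ∈ P.alts, Support P x y = Support P' x y) :
    Fd P = Fd P' := by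
  have hs' : ∀ x ∈ P'.alts, ∀ y ∈ P'.alts, Support P' x y = Support P x y := by
    intro x hx y hy
    rw [hs x (halts ▸ hx) y (halts ▸ hy)]
  have hm : ∀ x ∈ P.alts, ∀ y ∈ P.alts, Margin P x y = Margin P' x y := by
    intro x hx y hy
    rw [margin_eq_support, margin_eq_support, hs x hx y hy, hs y hy x hx]
  have hm' : ∀ x ∈ P'.alts, ∀ y ∈ P'.alts, Margin P' x y = Margin P x y := by
    intro x hx y hy
    rw [margin_eq_support, margin_eq_support, hs' x hx y hy, hs' y hy x hx]
  have hS : InS P ↔ InS P' := ⟨inS_congr halts hm, inS_congr halts.symm hm'⟩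
  have hT : Tb P = Tb P' := by
    unfold Tb
    rw [← halts]
    apply Finset.filter_congr
    intro x hx
    rw [qsup_congr halts hm hs hx]
  unfold Fd
  rw [minimax_congr halts hm]
  by_cases h1 : InS P
  · rw [if_pos h1, if_pos (hS.mp h1), hT, halts]
  · rw [if_neg h1, if_neg (fun hc => h1 (hS.mpr hc))]

lemma swo_asymm (h : IsSWO P) (hi : i ∈ P.voters) (ha : a ∈ P.alts) (hb : b ∈ P.alts)
    (hab : P.rel i a b = true) : P.rel i b a = false :=
  (h i hi).1 a ha b hb hab

/-- Counting a filter by splitting off one element. -/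
lemma card_filter_split {s : Finset ℕ} {i : ℕ} (hi : i ∈ s) (p : ℕ → Prop)
    [DecidablePred p] :
    (s.filter p).card = ((s.erase i).filter p).card + (if p i then 1 else 0) := by
  conv_lhs => rw [← Finset.insert_erase hi]
  rw [Finset.filter_insert]
  split_ifs with h
  · rw [Finset.card_insert_of_notMem (fun hc => (Finset.notMem_erase i s)
      (Finset.mem_of_mem_filter _ hc))]
  · rw [Nat.add_zero]

lemma support_update (hv : P'.voters = P.voters) {i : ℕ} (hi : i ∈ P.voters)
    (hrel : ∀ j ∈ P.voters, j ≠ i → P'.rel j a b = P.rel j a b) :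
    Support P' a b + (if P.rel i a b then 1 else 0)
      = Support P a b + (if P'.rel i a b then 1 else 0) := by
  unfold Support
  rw [hv, card_filter_split hi (fun j => P.rel j a b = true),
    card_filter_split hi (fun j => P'.rel j a b = true)]
  have he : ((P.voters.erase i).filter fun j => P'.rel j a b = true)
      = ((P.voters.erase i).filter fun j => P.rel j a b = true) := by
    apply Finset.filter_congr
    intro j hj
    rw [hrel j (Finset.mem_of_mem_erase hj) (Finset.ne_of_mem_erase hj)]
  rw [he]
  ring

lemma support_add_voter {j : ℕ} (hj : j ∉ P.voters) (hv : P'.voters = insert j P.voters)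
    (hrel : ∀ i ∈ P.voters, P'.rel i a b = P.rel i a b) :
    Support P' a b = Support P a b + (if P'.rel j a b then 1 else 0) := by
  unfold Support
  rw [hv, Finset.filter_insert]
  have he : (P.voters.filter fun i => P'.rel i a b = true)
      = (P.voters.filter fun i => P.rel i a b = true) := by
    apply Finset.filter_congr
    intro i hi
    rw [hrel i hi]
  split_ifs with h
  · rw [Finset.card_insert_of_notMem (fun hc => hj (Finset.mem_of_mem_filter _ hc)), he]
  · rw [he, Nat.add_zero]

lemma margin_add_voter {j : ℕ} (hj : j ∉ P.voters) (hv : P'.voters = insert j P.voters)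
    (hrel : ∀ i ∈ P.voters, ∀ x ∈ P.alts, ∀ y ∈ P.alts, P'.rel i x y = P.rel i x y)
    (ha : a ∈ P.alts) (hb : b ∈ P.alts) :
    Margin P' a b = Margin P a b
      + (if P'.rel j a b then 1 else 0) - (if P'.rel j b a then 1 else 0) := by
  rw [margin_eq_support, margin_eq_support,
    support_add_voter hj hv (fun i hi => hrel i hi a ha b hb),
    support_add_voter hj hv (fun i hi => hrel i hi b hb a ha)]
  split_ifs <;> push_cast <;> ring

lemma support_restrict {Y : Finset α} (ha : a ∈ Y) (hb : b ∈ Y) :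
    Support (P.restrict Y) a b = Support P a b := by
  unfold Support Profile.restrict
  apply congrArg
  apply Finset.filter_congr
  intro i _
  simp [ha, hb]

lemma margin_restrict {Y : Finset α} (ha : a ∈ Y) (hb : b ∈ Y) :
    Margin (P.restrict Y) a b = Margin P a b := by
  rw [margin_eq_support, margin_eq_support, support_restrict ha hb, support_restrict hb ha]


lemma shift_not_mem {s : Finset ℕ} {j : ℕ} : j + (s.sup id + 1) ∉ s := by
  intro hc
  have := Finset.le_sup (f := id) hc
  simp only [id] at this
  omega

lemma double_voters_mem {i : ℕ} :
    i ∈ P.double.voters ↔ i ∈ P.voters ∨ ∃ j ∈ P.voters, i = j + (P.voters.sup id + 1) := by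
  unfold Profile.double
  simp only [Finset.mem_union, Finset.mem_image]
  constructor
  · rintro (h | ⟨j, hj, rfl⟩)
    · exact Or.inl h
    · exact Or.inr ⟨j, hj, rfl⟩
  · rintro (h | ⟨j, hj, rfl⟩)
    · exact Or.inl h
    · exact Or.inr ⟨j, hj, rfl⟩

lemma double_rel_orig {i : ℕ} (hi : i ∈ P.voters) : P.double.rel i = P.rel i := by
  unfold Profile.double
  simp [hi]

lemma double_rel_copy {j : ℕ} (hj : j ∈ P.voters) :
    P.double.rel (j + (P.voters.sup id + 1)) = P.rel j := by
  unfold Profile.double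
  funext a b
  show (if j + (P.voters.sup id + 1) ∈ P.voters then _ else _) = _
  rw [if_neg shift_not_mem, Nat.add_sub_cancel]

lemma support_double : Support P.double a b = 2 * Support P a b := by
  unfold Support
  show ((P.voters ∪ P.voters.image fun i => i + (P.voters.sup id + 1)).filter
    fun i => P.double.rel i a b = true).card = _
  rw [Finset.filter_union]
  rw [Finset.card_union_of_disjoint]
  · have h1 : (P.voters.filter fun i => P.double.rel i a b = true)
        = P.voters.filter fun i => P.rel i a b = true := by
      apply Finset.filter_congr
      intro i hi
      rw [double_rel_orig hi]
    have h2 : ((P.voters.image fun i => i + (P.voters.sup id + 1)).filter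
        fun i => P.double.rel i a b = true)
        = (P.voters.filter fun i => P.rel i a b = true).image
            fun i => i + (P.voters.sup id + 1) := by
      rw [Finset.filter_image]
      congr 1
      apply Finset.filter_congr
      intro j hj
      rw [double_rel_copy hj]
    rw [h1, h2, Finset.card_image_of_injective _ (add_left_injective _)]
    omega
  · apply Finset.disjoint_filter_filter
    rw [Finset.disjoint_left]
    intro x hx hc
    obtain ⟨j, hj, rfl⟩ := Finset.mem_image.mp hc
    exact shift_not_mem hx

lemma margin_double : Margin P.double a b = 2 * Margin P a b := by
  rw [margin_eq_support, margin_eq_support, support_double, support_double]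
  push_cast
  ring

lemma double_alts : P.double.alts = P.alts := rfl

lemma swo_double (h : IsSWO P) : IsSWO P.double := by
  intro i hi
  rcases double_voters_mem.mp hi with hio | ⟨j, hj, rfl⟩
  · rw [show P.double.rel i = P.rel i from double_rel_orig hio]
    exact h i hio
  · rw [show P.double.rel _ = P.rel j from double_rel_copy hj]
    exact h j hj

lemma double_mem_dom23 (h : P ∈ Dom23 α) : P.double ∈ Dom23 α := by
  obtain ⟨hswo, hne, hcard⟩ := h
  refine ⟨swo_double hswo, ?_, hcard⟩
  obtain ⟨i, hi⟩ := hne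
  exact ⟨i, Finset.mem_union_left _ hi⟩

lemma combine_alts : (P.combine Q).alts = P.alts := rfl

lemma combine_rel_left {i : ℕ} (hi : i ∈ P.voters) : (P.combine Q).rel i = P.rel i := by
  unfold Profile.combine
  simp [hi]

lemma combine_rel_right {i : ℕ} (hi : i ∉ P.voters) : (P.combine Q).rel i = Q.rel i := by
  unfold Profile.combine
  simp [hi]

lemma support_combine (hd : Disjoint P.voters Q.voters) :
    Support (P.combine Q) a b = Support P a b + Support Q a b := by
  unfold Support
  show ((P.voters ∪ Q.voters).filter fun i => (P.combine Q).rel i a b = true).card = _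
  rw [Finset.filter_union, Finset.card_union_of_disjoint
    (Finset.disjoint_filter_filter hd)]
  congr 1
  · apply congrArg
    apply Finset.filter_congr
    intro i hi
    rw [combine_rel_left hi]
  · apply congrArg
    apply Finset.filter_congr
    intro i hi
    rw [combine_rel_right (Finset.disjoint_right.mp hd hi)]

lemma margin_combine (hd : Disjoint P.voters Q.voters) :
    Margin (P.combine Q) a b = Margin P a b + Margin Q a b := by
  rw [margin_eq_support, margin_eq_support, margin_eq_support,
    support_combine hd, support_combine hd]
  push_cast
  ring


lemma inS_double_iff : InS P.double ↔ InS P := by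
  constructor
  · rintro ⟨x, y, z, hxy, hxz, hyz, hA, hm, h2, h3⟩
    rw [margin_double] at hm h2 h3
    rw [margin_double] at h2 h3
    exact ⟨x, y, z, hxy, hxz, hyz, hA, by omega, by omega, by omega⟩
  · rintro ⟨x, y, z, hxy, hxz, hyz, hA, hm, h2, h3⟩
    refine ⟨x, y, z, hxy, hxz, hyz, hA, ?_, ?_, ?_⟩ <;>
      simp only [margin_double] <;> omega

lemma qsup_double_even : Even (qsup P.double a) := by
  unfold qsup
  rw [show P.double.alts = P.alts from rfl]
  have hf : ((P.alts.erase a).filter fun u => 0 < Margin P.double u a)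
      = (P.alts.erase a).filter fun u => 0 < Margin P u a := by
    apply Finset.filter_congr
    intro u _
    rw [margin_double]
    constructor <;> intro h <;> omega
  rw [hf]
  apply Finset.even_sum
  intro u _
  rw [support_double]
  exact even_two_mul _

lemma minimax_subset_double (h2 : 2 ≤ P.alts.card) : Minimax P ⊆ Minimax P.double := by
  intro x hx
  obtain ⟨hxA, hmin⟩ := Finset.mem_filter.mp hx
  apply mem_minimax (show x ∈ P.double.alts from hxA)
  intro b hb
  have hbA : b ∈ P.alts := hb
  have hne_x : (P.alts.erase x).Nonempty := erase_nonempty_of_two_le hxA h2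
  have hne_b : (P.alts.erase b).Nonempty := erase_nonempty_of_two_le hbA h2
  have hub : MMScore P.double x ≤ 2 * MMScore P x := by
    apply mmscore_le_of_forall (by exact hne_x)
    intro u hu
    have : Margin P u x ≤ MMScore P x := le_mmscore hu
    rw [show Margin P.double u x = 2 * Margin P u x from margin_double]
    omega
  obtain ⟨w, hw, hwe⟩ := exists_mmscore hne_b
  have hlb : 2 * MMScore P b ≤ MMScore P.double b := by
    have : Margin P.double w b ≤ MMScore P.double b := le_mmscore (by exact hw)
    rw [show Margin P.double w b = 2 * Margin P w b from margin_double] at this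
    omega
  have := hmin b hbA
  omega

theorem Fd_homog : Homogeneity (Dom23 α) (Fd (α := α)) := by
  intro P hP
  refine ⟨double_mem_dom23 hP, ?_⟩
  obtain ⟨hswo, hne, hcard⟩ := hP
  have h2 : 2 ≤ P.alts.card := by omega
  have hAne : P.alts.Nonempty := Finset.card_pos.mp (by omega)
  by_cases h1 : InS P
  · have hd : InS P.double := inS_double_iff.mpr h1
    have hTd : Tb P.double = P.alts := by
      unfold Tb
      rw [show P.double.alts = P.alts from rfl]
      apply Finset.filter_true_of_mem
      intro u _
      exact qsup_double_even
    have : Fd P.double = P.alts := by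
      unfold Fd
      rw [if_pos hd, hTd, if_pos (hTd ▸ hAne)]
    rw [this]
    exact Fd_subset_alts P
  · have hd : ¬ InS P.double := fun hc => h1 (inS_double_iff.mp hc)
    unfold Fd
    rw [if_neg h1, if_neg hd]
    exact minimax_subset_double h2


theorem Fd_wpr : WeakPositiveResponsiveness (Dom23 α) (Fd (α := α)) := by
  intro P hP P' hP' a haF hMove
  obtain ⟨hv, halts, haA, i, hi, hlast, hfirst, hmid, hoth⟩ := hMove
  obtain ⟨hswo, hvne, hcard⟩ := hP
  obtain ⟨hswo', _, _⟩ := hP'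
  have h2 : 2 ≤ P.alts.card := by omega
  have hi' : i ∈ P'.voters := hv ▸ hi
  have hM1 : ∀ b ∈ P.alts, b ≠ a → Margin P' b a = Margin P b a - 2 := by
    intro b hb hbne
    have e1' : P.rel i b a = true := hlast b hb hbne
    have e2' : P.rel i a b = false := swo_asymm hswo hi hb haA e1'
    have e3' : P'.rel i a b = true := hfirst b hb hbne
    have e4' : P'.rel i b a = false := swo_asymm hswo' hi' (halts ▸ haA) (halts ▸ hb) e3'
    have e1 := support_update (a := b) (b := a) (P := P) (P' := P') hv hi
      (fun j hj hne => hoth j hj hne b hb a haA)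
    have e2 := support_update (a := a) (b := b) (P := P) (P' := P') hv hi
      (fun j hj hne => hoth j hj hne a haA b hb)
    rw [e1', e4'] at e1
    rw [e2', e3'] at e2
    simp only [if_true, if_false, Bool.false_eq_true, Bool.true_eq_false] at e1 e2
    rw [margin_eq_support, margin_eq_support]
    omega
  have hM2 : ∀ b ∈ P.alts, ∀ c ∈ P.alts, c ≠ a → Margin P b c ≤ Margin P' b c := by
    intro b hb c hc hcne
    by_cases hba : b = a
    · have h1 := hM1 c hc hcne
      rw [hba, margin_antisymm P a c, margin_antisymm P' a c]
      omega
    · have hs1 : Support P b c = Support P' b c := support_congr hv.symm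
        (fun j hj => by
          by_cases hji : j = i
          · subst hji; exact (hmid b hb hba c hc hcne).symm
          · exact (hoth j hj hji b hb c hc).symm)
      have hs2 : Support P c b = Support P' c b := support_congr hv.symm
        (fun j hj => by
          by_cases hji : j = i
          · subst hji; exact (hmid c hc hcne b hb hba).symm
          · exact (hoth j hj hji c hc b hb).symm)
      rw [margin_eq_support, margin_eq_support, hs1, hs2]
  have hera : (P.alts.erase a).Nonempty := erase_nonempty_of_two_le haA h2
  have hera' : (P'.alts.erase a).Nonempty := by rw [halts]; exact hera
  have hsa : MMScore P' a ≤ MMScore P a - 2 := by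
    apply mmscore_le_of_forall hera'
    intro b hb
    have hbA : b ∈ P.alts := halts ▸ Finset.mem_of_mem_erase hb
    have hbne : b ≠ a := Finset.ne_of_mem_erase hb
    rw [hM1 b hbA hbne]
    have : Margin P b a ≤ MMScore P a := le_mmscore (Finset.mem_erase.mpr ⟨hbne, hbA⟩)
    omega
  have hsw : ∀ w ∈ P.alts, w ≠ a → MMScore P w ≤ MMScore P' w := by
    intro w hw hwne
    obtain ⟨v, hv', hve⟩ := exists_mmscore (erase_nonempty_of_two_le hw h2)
    have hvA : v ∈ P.alts := Finset.mem_of_mem_erase hv'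
    have h1 : Margin P v w ≤ Margin P' v w := hM2 v hvA w hw hwne
    have h2' : Margin P' v w ≤ MMScore P' w := le_mmscore (by
      rw [show P'.alts = P.alts from halts]; exact hv')
    omega
  have haMin : a ∈ Minimax P := Fd_subset_minimax P haF
  have hstrict : ∀ w ∈ P.alts, w ≠ a → MMScore P' a < MMScore P' w := by
    intro w hw hwne
    have h1 : MMScore P a ≤ MMScore P w := (Finset.mem_filter.mp haMin).2 w hw
    have h3 := hsw w hw hwne
    omega
  have hnS : ¬ InS P' := by
    intro hS
    obtain ⟨w, hw⟩ := hera
    have hwA : w ∈ P.alts := Finset.mem_of_mem_erase hw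
    have := inS_score_eq hS a (by rw [show P'.alts = P.alts from halts]; exact haA)
      w (by rw [show P'.alts = P.alts from halts]; exact hwA)
    have := hstrict w hwA (Finset.ne_of_mem_erase hw)
    omega
  have hMM : Minimax P' = {a} := by
    apply Finset.eq_singleton_iff_unique_mem.mpr
    constructor
    · apply mem_minimax (by rw [show P'.alts = P.alts from halts]; exact haA)
      intro b hb
      have hbA : b ∈ P.alts := halts ▸ hb
      by_cases hba : b = a
      · subst hba; exact le_refl _
      · exact le_of_lt (hstrict b hbA hba)
    · intro w hw
      by_contra hne
      obtain ⟨hwA, hwmin⟩ := Finset.mem_filter.mp hw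
      have h1 := hwmin a (by rw [show P'.alts = P.alts from halts]; exact haA)
      have h2' := hstrict w (halts ▸ hwA) hne
      omega
  unfold Fd
  rw [if_neg hnS]
  exact hMM

theorem Fd_pi : PositiveInvolvement (Dom23 α) (Fd (α := α)) := by
  intro P hP P' hP' a haF hAdd
  obtain ⟨halts, j, hj, hv, htop, hold⟩ := hAdd
  obtain ⟨hswo, hvne, hcard⟩ := hP
  obtain ⟨hswo', _, _⟩ := hP'
  have h2 : 2 ≤ P.alts.card := by omega
  have haA : a ∈ P.alts := Fd_subset_alts P haF
  have hj' : j ∈ P'.voters := by rw [hv]; exact Finset.mem_insert_self _ _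
  have hMgen : ∀ b ∈ P.alts, ∀ c ∈ P.alts,
      Margin P b c - 1 ≤ Margin P' b c ∧ Margin P' b c ≤ Margin P b c + 1 := by
    intro b hb c hc
    rw [margin_add_voter hj hv hold hb hc]
    split_ifs <;> omega
  have hM1 : ∀ b ∈ P.alts, b ≠ a → Margin P' b a = Margin P b a - 1 := by
    intro b hb hbne
    have e3 : P'.rel j a b = true := htop b hb hbne
    have e4 : P'.rel j b a = false := swo_asymm hswo' hj' (halts ▸ haA) (halts ▸ hb) e3
    rw [margin_add_voter hj hv hold hb haA, e3, e4]
    simp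
  have haMin : a ∈ Minimax P := Fd_subset_minimax P haF
  have hnS : ¬ InS P' := by
    rintro ⟨x, y, z, hxy, hxz, hyz, hA', c1, c2, c3⟩
    have hA : P.alts = {x, y, z} := by rw [← halts]; exact hA'
    set m := Margin P' y x with hm
    -- find u, v such that cycle is u → a → v → u in P'
    have key : ∃ u v, u ∈ P.alts ∧ v ∈ P.alts ∧ u ≠ a ∧ v ≠ a ∧
        Margin P' u a = m ∧ Margin P' a v = m ∧ Margin P' v u = m ∧
        (∀ b ∈ P.alts, b = a ∨ b = u ∨ b = v) := by
      rcases mem_of_mem_triple (hA ▸ haA) with rfl | rfl | rfl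
      · exact ⟨y, z, by rw [hA]; simp, by rw [hA]; simp, Ne.symm hxy,
          Ne.symm hxz, rfl, c2, c3,
          fun b hb => by rcases mem_of_mem_triple (hA ▸ hb) with rfl | rfl | rfl <;> simp⟩
      · exact ⟨z, x, by rw [hA]; simp, by rw [hA]; simp, Ne.symm hyz, hxy,
          c3, rfl, c2,
          fun b hb => by rcases mem_of_mem_triple (hA ▸ hb) with rfl | rfl | rfl <;> simp⟩
      · exact ⟨x, y, by rw [hA]; simp, by rw [hA]; simp, hxz, hyz,
          c2, c3, rfl,
          fun b hb => by rcases mem_of_mem_triple (hA ▸ hb) with rfl | rfl | rfl <;> simp⟩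
    obtain ⟨u, v, huA, hvA, hua, hva, e1, e2, e3, hcover⟩ := key
    have hmpos : 0 < m := c1
    have hm1 : Margin P u a = m + 1 := by
      have := hM1 u huA hua
      omega
    have hm2 : Margin P a v = m - 1 := by
      have h1 := hM1 v hvA hva
      have h4 : Margin P' v a = -m := by rw [margin_antisymm P' v a, e2]
      have h5 : Margin P a v = - Margin P v a := margin_antisymm P a v
      omega
    have hscA : m + 1 ≤ MMScore P a := by
      rw [← hm1]
      exact le_mmscore (Finset.mem_erase.mpr ⟨hua, huA⟩)
    have hscV : MMScore P v ≤ m - 1 := by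
      apply mmscore_le_of_forall ⟨a, Finset.mem_erase.mpr ⟨Ne.symm hva, haA⟩⟩
      intro b hb
      have hbA : b ∈ P.alts := Finset.mem_of_mem_erase hb
      have hbv : b ≠ v := Finset.ne_of_mem_erase hb
      rcases hcover b hbA with h | h | h
      · rw [h]; omega
      · rw [h]
        have h6 := (hMgen u huA v hvA).1
        have h7 : Margin P' u v = - Margin P' v u := margin_antisymm P' u v
        omega
      · exact absurd h hbv
    have := (Finset.mem_filter.mp haMin).2 v hvA
    omega
  -- now conclude
  have halts' : P'.alts = P.alts := halts
  have hsa : MMScore P' a ≤ MMScore P a - 1 := by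
    apply mmscore_le_of_forall (by rw [halts']; exact erase_nonempty_of_two_le haA h2)
    intro b hb
    have hbA : b ∈ P.alts := halts' ▸ Finset.mem_of_mem_erase hb
    have hbne : b ≠ a := Finset.ne_of_mem_erase hb
    rw [hM1 b hbA hbne]
    have : Margin P b a ≤ MMScore P a := le_mmscore (Finset.mem_erase.mpr ⟨hbne, hbA⟩)
    omega
  unfold Fd
  rw [if_neg hnS]
  apply mem_minimax (by rw [halts']; exact haA)
  intro b hb
  have hbA : b ∈ P.alts := halts' ▸ hb
  obtain ⟨w, hw, hwe⟩ := exists_mmscore (erase_nonempty_of_two_le hbA h2)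
  have hwA : w ∈ P.alts := Finset.mem_of_mem_erase hw
  have h6 := (hMgen w hwA b hbA).1
  have h7 : Margin P' w b ≤ MMScore P' b := le_mmscore (by rw [halts']; exact hw)
  have h8 : MMScore P a ≤ MMScore P b := (Finset.mem_filter.mp haMin).2 b hbA
  omega


lemma card_triple {x y z : α} (hxy : x ≠ y) (hxz : x ≠ z) (hyz : y ≠ z) :
    ({x, y, z} : Finset α).card = 3 := by
  rw [Finset.card_insert_of_notMem (by simp [hxy, hxz]),
    Finset.card_insert_of_notMem (by simp [hyz]), Finset.card_singleton]

lemma inS_card3 (h : InS P) : P.alts.card = 3 := by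
  obtain ⟨x, y, z, hxy, hxz, hyz, hA, _⟩ := h
  rw [hA]; exact card_triple hxy hxz hyz

lemma Fd_eq_minimax (h : P.alts.card ≠ 3) : Fd P = Minimax P := by
  unfold Fd
  rw [if_neg (fun hc => h (inS_card3 hc))]

lemma minimax_singleton_pair {c : α} (hA : P.alts = {a, c}) (hac : a ≠ c)
    (h : Minimax P = {a}) : 0 < Margin P a c := by
  have hcA : c ∈ P.alts := by rw [hA]; simp
  have haA : a ∈ P.alts := by rw [hA]; simp
  have hcn : c ∉ Minimax P := by rw [h]; simp [Ne.symm hac]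
  have : ¬ (∀ w ∈ P.alts, MMScore P c ≤ MMScore P w) := by
    intro hc
    exact hcn (mem_minimax hcA hc)
  push_neg at this
  obtain ⟨w, hwA, hw⟩ := this
  have hwa : w = a := by
    rcases (by rw [hA] at hwA; simpa using hwA : w = a ∨ w = c) with h' | h'
    · exact h'
    · subst h'; omega
  rw [hwa] at hw
  -- MMScore P a < MMScore P c
  have hsa : MMScore P a = Margin P c a := by
    apply le_antisymm
    · apply mmscore_le_of_forall ⟨c, Finset.mem_erase.mpr ⟨Ne.symm hac, hcA⟩⟩
      intro u hu
      have huA := Finset.mem_of_mem_erase hu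
      have hune := Finset.ne_of_mem_erase hu
      rcases (by rw [hA] at huA; simpa using huA : u = a ∨ u = c) with h' | h'
      · exact absurd h' hune
      · rw [h']
    · exact le_mmscore (Finset.mem_erase.mpr ⟨Ne.symm hac, hcA⟩)
  have hsc : MMScore P c = Margin P a c := by
    apply le_antisymm
    · apply mmscore_le_of_forall ⟨a, Finset.mem_erase.mpr ⟨hac, haA⟩⟩
      intro u hu
      have huA := Finset.mem_of_mem_erase hu
      have hune := Finset.ne_of_mem_erase hu
      rcases (by rw [hA] at huA; simpa using huA : u = a ∨ u = c) with h' | h'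
      · rw [h']
      · exact absurd h' hune
    · exact le_mmscore (Finset.mem_erase.mpr ⟨hac, haA⟩)
  have hanti : Margin P c a = - Margin P a c := margin_antisymm P c a
  omega

theorem Fd_nis : NearImmunityToSpoilers (Dom23 α) (Fd (α := α)) := by
  intro P hP a haA b hbA hmD hrD hFm hFr _
  obtain ⟨hswo, hvne, hcard⟩ := hP
  have hrAlts : (P.restrict {a, b}).alts = {a, b} := rfl
  have hab : a ≠ b := by
    intro hc
    subst hc
    have := hrD.2.2
    rw [hrAlts] at this
    simp at this
  have hrcard : ({a, b} : Finset α).card = 2 := by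
    rw [Finset.card_insert_of_notMem (by simp [hab]), Finset.card_singleton]
  have hmAlts : (P.minus b).alts = P.alts.erase b := rfl
  have hmcard : (P.alts.erase b).card = 2 := by
    have h1 := hmD.2.2
    rw [hmAlts] at h1
    have h2 : (P.alts.erase b).card = P.alts.card - 1 := Finset.card_erase_of_mem hbA
    omega
  have haeb : a ∈ P.alts.erase b := Finset.mem_erase.mpr ⟨hab, haA⟩
  obtain ⟨c, hc⟩ := Finset.card_eq_one.mp (by
    rw [Finset.card_erase_of_mem haeb, hmcard] : ((P.alts.erase b).erase a).card = 1)
  have hcmem : c ∈ (P.alts.erase b).erase a := by rw [hc]; simp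
  have hca : c ≠ a := Finset.ne_of_mem_erase hcmem
  have hcb : c ≠ b := Finset.ne_of_mem_erase (Finset.mem_of_mem_erase hcmem)
  have hcA : c ∈ P.alts := Finset.mem_of_mem_erase (Finset.mem_of_mem_erase hcmem)
  have hEb : P.alts.erase b = {a, c} := by
    rw [← Finset.insert_erase haeb, hc]
  -- margins from the two hypotheses
  have hMr : Minimax (P.restrict {a, b}) = {a} := by
    rw [← Fd_eq_minimax (by rw [hrAlts, hrcard]; omega)]
    exact hFr
  have hab_pos : 0 < Margin P a b := by
    have := minimax_singleton_pair (P := P.restrict {a, b}) hrAlts hab hMr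
    rwa [margin_restrict (by simp) (by simp)] at this
  have hMm : Minimax (P.minus b) = {a} := by
    rw [← Fd_eq_minimax (by rw [hmAlts, hmcard]; omega)]
    exact hFm
  have hac_pos : 0 < Margin P a c := by
    have := minimax_singleton_pair (P := P.minus b) (by rw [hmAlts, hEb]) hca.symm hMm
    rwa [show Profile.minus P b = P.restrict (P.alts.erase b) from rfl,
      margin_restrict haeb (hEb ▸ (by simp : c ∈ ({a, c} : Finset α)))] at this
  -- scores in P
  have hcover : ∀ w ∈ P.alts, w = b ∨ w = a ∨ w = c := by
    intro w hw
    have hPA : P.alts = {b, a, c} := by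
      rw [← Finset.insert_erase hbA, hEb]
    rw [hPA] at hw
    simpa using hw
  have hsa : MMScore P a ≤ -1 := by
    apply mmscore_le_of_forall ⟨b, Finset.mem_erase.mpr ⟨Ne.symm hab, hbA⟩⟩
    intro w hw
    have hwA := Finset.mem_of_mem_erase hw
    have hwa := Finset.ne_of_mem_erase hw
    have hba : Margin P b a = - Margin P a b := margin_antisymm P b a
    have hca' : Margin P c a = - Margin P a c := margin_antisymm P c a
    rcases hcover w hwA with h' | h' | h' <;> [rw [h']; exact absurd h' hwa; rw [h']] <;> omega
  have hsb : 1 ≤ MMScore P b := by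
    have := le_mmscore (Finset.mem_erase.mpr ⟨hab, haA⟩)
    omega
  have hsc : 1 ≤ MMScore P c := by
    have := le_mmscore (Finset.mem_erase.mpr ⟨hca.symm, haA⟩)
    omega
  have hnS : ¬ InS P := by
    intro hS
    have := inS_score_eq hS a haA b hbA
    omega
  unfold Fd
  rw [if_neg hnS]
  apply mem_minimax haA
  intro w hwA
  rcases hcover w hwA with h' | h' | h' <;> rw [h'] <;> omega


theorem Fd_anon : Anonymity (Dom23 α) (Fd (α := α)) := by
  rintro P _ P' _ halts ⟨π, himg, hrel⟩
  apply Fd_congr halts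
  intro x hx y hy
  unfold Support
  rw [← himg, Finset.filter_image, Finset.card_image_of_injective _ π.injective]
  congr 1
  apply Finset.filter_congr
  intro i hi
  rw [← hrel i hi x hx y hy]

lemma inS_map (τ : Equiv.Perm α) (himg : P.alts.image τ = P'.alts)
    (hM : ∀ p ∈ P.alts, ∀ q ∈ P.alts, Margin P p q = Margin P' (τ p) (τ q)) :
    InS P → InS P' := by
  rintro ⟨x, y, z, hxy, hxz, hyz, hA, hm, h2, h3⟩
  have hx : x ∈ P.alts := by rw [hA]; simp
  have hy : y ∈ P.alts := by rw [hA]; simp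
  have hz : z ∈ P.alts := by rw [hA]; simp
  refine ⟨τ x, τ y, τ z, fun hc => hxy (τ.injective hc), fun hc => hxz (τ.injective hc),
    fun hc => hyz (τ.injective hc), ?_, ?_, ?_, ?_⟩
  · rw [← himg, hA]
    simp [Finset.image_insert]
  · rw [← hM y hy x hx]; exact hm
  · rw [← hM x hx z hz, ← hM y hy x hx]; exact h2
  · rw [← hM z hz y hy, ← hM y hy x hx]; exact h3

theorem Fd_neut : Neutrality (Dom23 α) (Fd (α := α)) := by
  intro P _ P' _ hvoters τ himg hrel
  have hS : ∀ p ∈ P.alts, ∀ q ∈ P.alts, Support P p q = Support P' (τ p) (τ q) := by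
    intro p hp q hq
    unfold Support
    rw [← hvoters]
    congr 1
    apply Finset.filter_congr
    intro i hi
    rw [hrel i hi p hp q hq]
  have hM : ∀ p ∈ P.alts, ∀ q ∈ P.alts, Margin P p q = Margin P' (τ p) (τ q) := by
    intro p hp q hq
    rw [margin_eq_support, margin_eq_support, hS p hp q hq, hS q hq p hp]
  have herase : ∀ p : α, P'.alts.erase (τ p) = (P.alts.erase p).image τ := by
    intro p
    rw [← himg, Finset.image_erase τ.injective]
  have hMM : ∀ p ∈ P.alts, MMScore P p = MMScore P' (τ p) := by
    intro p hp
    have himgs : (P'.alts.erase (τ p)).image (fun b => Margin P' b (τ p))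
        = (P.alts.erase p).image (fun b => Margin P b p) := by
      rw [herase p, Finset.image_image]
      apply Finset.image_congr
      intro b hb
      exact (hM b (Finset.mem_of_mem_erase hb) p hp).symm
    unfold MMScore
    rw [himgs]
  have hMini : Minimax P' = (Minimax P).image τ := by
    unfold Minimax
    rw [← himg, Finset.filter_image]
    congr 1
    apply Finset.filter_congr
    intro p hp
    constructor
    · intro hc q hq
      rw [hMM p hp, hMM q hq]
      exact hc (τ q) (Finset.mem_image_of_mem τ hq)
    · intro hc b hb
      obtain ⟨q, hq, rfl⟩ := Finset.mem_image.mp hb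
      rw [← hMM p hp, ← hMM q hq]
      exact hc q hq
  have hq : ∀ p ∈ P.alts, qsup P p = qsup P' (τ p) := by
    intro p hp
    unfold qsup
    rw [herase p, Finset.filter_image, Finset.sum_image
      (fun x _ y _ h => τ.injective h)]
    have hfilt : ((P.alts.erase p).filter fun u => 0 < Margin P' (τ u) (τ p))
        = (P.alts.erase p).filter fun u => 0 < Margin P u p := by
      apply Finset.filter_congr
      intro u hu
      rw [← hM u (Finset.mem_of_mem_erase hu) p hp]
    rw [hfilt]
    apply Finset.sum_congr rfl
    intro u hu
    exact hS p hp u (Finset.mem_of_mem_erase (Finset.mem_of_mem_filter _ hu))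
  have hT : Tb P' = (Tb P).image τ := by
    unfold Tb
    rw [← himg, Finset.filter_image]
    congr 1
    apply Finset.filter_congr
    intro p hp
    rw [← hq p hp]
  have hInS : InS P ↔ InS P' := by
    constructor
    · exact inS_map τ himg hM
    · apply inS_map τ.symm
      · rw [← himg, Finset.image_image]
        simp
      · intro p hp q hq
        have hp' : τ.symm p ∈ P.alts := by
          obtain ⟨u, hu, rfl⟩ := Finset.mem_image.mp (by rw [himg]; exact hp)
          simpa using hu
        have hq' : τ.symm q ∈ P.alts := by
          obtain ⟨u, hu, rfl⟩ := Finset.mem_image.mp (by rw [himg]; exact hq)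
          simpa using hu
        have := hM (τ.symm p) hp' (τ.symm q) hq'
        simpa using this.symm
  unfold Fd
  by_cases h1 : InS P
  · rw [if_pos h1, if_pos (hInS.mp h1), hT]
    by_cases h2 : (Tb P).Nonempty
    · rw [if_pos h2, if_pos (h2.image τ)]
    · rw [if_neg h2, if_neg (by
        intro hc
        exact h2 (by
          obtain ⟨w, hw⟩ := hc
          obtain ⟨u, hu, _⟩ := Finset.mem_image.mp hw
          exact ⟨u, hu⟩)), himg]
  · rw [if_neg h1, if_neg (fun hc => h1 (hInS.mpr hc)), hMini]


/-! ### The explicit profiles used to refute block preservation -/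

/-- Rank function on three alternatives. -/
def rk3 (x y z : α) (p q r : ℕ) : α → ℕ := fun a => if a = x then p else if a = y then q else r

/-- Ballot determined by a rank function. -/
def relOf (ρ : ℕ → α → ℕ) : ℕ → α → α → Bool := fun i a b => decide (ρ i b < ρ i a)

lemma isSWO_relOf {v : Finset ℕ} {A : Finset α} {ρ : ℕ → α → ℕ} :
    IsSWO (⟨v, A, relOf ρ⟩ : Profile α) := by
  intro i _
  constructor
  · intro a _ b _ h
    simp only [relOf, decide_eq_true_eq] at h ⊢
    simp only [decide_eq_false_iff_not]
    omega
  · intro a _ b _ c _ h1 h2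
    simp only [relOf, decide_eq_false_iff_not] at h1 h2 ⊢
    omega

/-- The ballots of the 5-voter profile with a perfect cycle and
asymmetric supports. -/
def ρ5 (x y z : α) : ℕ → α → ℕ
  | 0 => rk3 x y z 2 1 0
  | 1 => rk3 x y z 0 2 1
  | 2 => rk3 x y z 1 0 2
  | 3 => rk3 x y z 1 0 0
  | _ => rk3 x y z 0 1 1

/-- The 5-voter profile. -/
def P5 (x y z : α) : Profile α := ⟨{0, 1, 2, 3, 4}, {x, y, z}, relOf (ρ5 x y z)⟩

/-- The ballots of the block profile: one voter for each linear order. -/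
def ρB (x y z : α) : ℕ → α → ℕ
  | 5 => rk3 x y z 2 1 0
  | 6 => rk3 x y z 2 0 1
  | 7 => rk3 x y z 1 2 0
  | 8 => rk3 x y z 0 2 1
  | 9 => rk3 x y z 1 0 2
  | _ => rk3 x y z 0 1 2

/-- The block profile. -/
def QB (x y z : α) : Profile α := ⟨{5, 6, 7, 8, 9, 10}, {x, y, z}, relOf (ρB x y z)⟩


section Compute

variable {x y z : α}

private lemma sup5 (hxy : x ≠ y) (hxz : x ≠ z) (hyz : y ≠ z) :
    Support (P5 x y z) x y = 3 ∧ Support (P5 x y z) y x = 2 ∧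
    Support (P5 x y z) y z = 2 ∧ Support (P5 x y z) z y = 1 ∧
    Support (P5 x y z) z x = 3 ∧ Support (P5 x y z) x z = 2 := by
  refine ⟨?_, ?_, ?_, ?_, ?_, ?_⟩ <;>
  · unfold Support P5
    simp only [Finset.filter_insert, Finset.filter_singleton]
    simp only [relOf, ρ5, rk3, Finset.filter_insert, Finset.filter_singleton,
      if_pos rfl, if_neg hxy, if_neg hxz, if_neg hyz, if_neg (Ne.symm hxy),
      if_neg (Ne.symm hxz), if_neg (Ne.symm hyz)]
    decide

private lemma supB (hxy : x ≠ y) (hxz : x ≠ z) (hyz : y ≠ z) :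
    Support (QB x y z) x y = 3 ∧ Support (QB x y z) y x = 3 ∧
    Support (QB x y z) y z = 3 ∧ Support (QB x y z) z y = 3 ∧
    Support (QB x y z) z x = 3 ∧ Support (QB x y z) x z = 3 := by
  refine ⟨?_, ?_, ?_, ?_, ?_, ?_⟩ <;>
  · unfold Support QB
    simp only [Finset.filter_insert, Finset.filter_singleton]
    simp only [relOf, ρB, rk3, Finset.filter_insert, Finset.filter_singleton,
      if_pos rfl, if_neg hxy, if_neg hxz, if_neg hyz, if_neg (Ne.symm hxy),
      if_neg (Ne.symm hxz), if_neg (Ne.symm hyz)]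
    decide

private lemma disj5B : Disjoint (P5 x y z).voters (QB x y z).voters := by
  show Disjoint ({0,1,2,3,4} : Finset ℕ) {5,6,7,8,9,10}
  decide

private lemma mar5 (hxy : x ≠ y) (hxz : x ≠ z) (hyz : y ≠ z) :
    Margin (P5 x y z) x y = 1 ∧ Margin (P5 x y z) y x = -1 ∧
    Margin (P5 x y z) y z = 1 ∧ Margin (P5 x y z) z y = -1 ∧
    Margin (P5 x y z) z x = 1 ∧ Margin (P5 x y z) x z = -1 := by
  obtain ⟨s1, s2, s3, s4, s5, s6⟩ := sup5 hxy hxz hyz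
  refine ⟨?_, ?_, ?_, ?_, ?_, ?_⟩ <;> rw [margin_eq_support] <;>
    simp [s1, s2, s3, s4, s5, s6]

private lemma marC (hxy : x ≠ y) (hxz : x ≠ z) (hyz : y ≠ z) :
    Margin ((P5 x y z).combine (QB x y z)) x y = 1 ∧
    Margin ((P5 x y z).combine (QB x y z)) y x = -1 ∧
    Margin ((P5 x y z).combine (QB x y z)) y z = 1 ∧
    Margin ((P5 x y z).combine (QB x y z)) z y = -1 ∧
    Margin ((P5 x y z).combine (QB x y z)) z x = 1 ∧
    Margin ((P5 x y z).combine (QB x y z)) x z = -1 := by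
  obtain ⟨m1, m2, m3, m4, m5, m6⟩ := mar5 hxy hxz hyz
  obtain ⟨s1, s2, s3, s4, s5, s6⟩ := supB hxy hxz hyz
  have hB : ∀ a b : α, Margin (QB x y z) a b = (Support (QB x y z) a b : ℤ)
      - Support (QB x y z) b a := fun a b => margin_eq_support _ a b
  refine ⟨?_, ?_, ?_, ?_, ?_, ?_⟩ <;> rw [margin_combine disj5B, hB] <;>
    simp [m1, m2, m3, m4, m5, m6, s1, s2, s3, s4, s5, s6]

private lemma alts5 : (P5 x y z).alts = {x, y, z} := rfl

private lemma altsC : ((P5 x y z).combine (QB x y z)).alts = {x, y, z} := rfl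

private lemma inS5 (hxy : x ≠ y) (hxz : x ≠ z) (hyz : y ≠ z) : InS (P5 x y z) := by
  obtain ⟨m1, m2, m3, m4, m5, m6⟩ := mar5 hxy hxz hyz
  refine ⟨y, x, z, Ne.symm hxy, hyz, hxz, ?_, ?_, ?_, ?_⟩
  · rw [alts5]
    exact Finset.insert_comm x y {z}
  · rw [m1]; omega
  · rw [m3, m1]
  · rw [m5, m1]

private lemma inSC (hxy : x ≠ y) (hxz : x ≠ z) (hyz : y ≠ z) :
    InS ((P5 x y z).combine (QB x y z)) := by
  obtain ⟨m1, m2, m3, m4, m5, m6⟩ := marC hxy hxz hyz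
  refine ⟨y, x, z, Ne.symm hxy, hyz, hxz, ?_, ?_, ?_, ?_⟩
  · rw [altsC]
    exact Finset.insert_comm x y {z}
  · rw [m1]; omega
  · rw [m3, m1]
  · rw [m5, m1]

private lemma erx (hxy : x ≠ y) (hxz : x ≠ z) :
    ({x, y, z} : Finset α).erase x = {y, z} :=
  Finset.erase_insert (by simp [hxy, hxz])

private lemma ery (hxy : x ≠ y) (hxz : x ≠ z) (hyz : y ≠ z) :
    ({x, y, z} : Finset α).erase y = {x, z} := by
  rw [Finset.insert_comm]
  exact Finset.erase_insert (by simp [Ne.symm hxy, hyz])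

private lemma erz (hxy : x ≠ y) (hxz : x ≠ z) (hyz : y ≠ z) :
    ({x, y, z} : Finset α).erase z = {x, y} := by
  have h : ({x, y, z} : Finset α) = insert z {x, y} := by
    ext w; simp; tauto
  rw [h]
  exact Finset.erase_insert (by simp [Ne.symm hxz, Ne.symm hyz])

private lemma qsup5 (hxy : x ≠ y) (hxz : x ≠ z) (hyz : y ≠ z) :
    qsup (P5 x y z) x = 2 ∧ qsup (P5 x y z) y = 2 ∧ qsup (P5 x y z) z = 1 := by
  obtain ⟨m1, m2, m3, m4, m5, m6⟩ := mar5 hxy hxz hyz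
  obtain ⟨s1, s2, s3, s4, s5, s6⟩ := sup5 hxy hxz hyz
  refine ⟨?_, ?_, ?_⟩ <;> unfold qsup
  · rw [alts5, erx hxy hxz, Finset.filter_insert, if_neg (by rw [m2]; omega),
      Finset.filter_singleton, if_pos (by rw [m5]; omega), Finset.sum_singleton, s6]
  · rw [alts5, ery hxy hxz hyz, Finset.filter_insert, if_pos (by rw [m1]; omega),
      Finset.filter_singleton, if_neg (by rw [m4]; omega)]
    simp [s2]
  · rw [alts5, erz hxy hxz hyz, Finset.filter_insert, if_neg (by rw [m6]; omega),
      Finset.filter_singleton, if_pos (by rw [m3]; omega), Finset.sum_singleton, s4]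

private lemma supC (hxy : x ≠ y) (hxz : x ≠ z) (hyz : y ≠ z) :
    Support ((P5 x y z).combine (QB x y z)) x z = 5 ∧
    Support ((P5 x y z).combine (QB x y z)) y x = 5 ∧
    Support ((P5 x y z).combine (QB x y z)) z y = 4 := by
  obtain ⟨s1, s2, s3, s4, s5, s6⟩ := sup5 hxy hxz hyz
  obtain ⟨t1, t2, t3, t4, t5, t6⟩ := supB hxy hxz hyz
  refine ⟨?_, ?_, ?_⟩ <;> rw [support_combine disj5B] <;> omega

private lemma qsupC (hxy : x ≠ y) (hxz : x ≠ z) (hyz : y ≠ z) :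
    qsup ((P5 x y z).combine (QB x y z)) x = 5 ∧
    qsup ((P5 x y z).combine (QB x y z)) y = 5 ∧
    qsup ((P5 x y z).combine (QB x y z)) z = 4 := by
  obtain ⟨m1, m2, m3, m4, m5, m6⟩ := marC hxy hxz hyz
  obtain ⟨c1, c2, c3⟩ := supC hxy hxz hyz
  refine ⟨?_, ?_, ?_⟩ <;> unfold qsup
  · rw [altsC, erx hxy hxz, Finset.filter_insert, if_neg (by rw [m2]; omega),
      Finset.filter_singleton, if_pos (by rw [m5]; omega), Finset.sum_singleton, c1]
  · rw [altsC, ery hxy hxz hyz, Finset.filter_insert, if_pos (by rw [m1]; omega),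
      Finset.filter_singleton, if_neg (by rw [m4]; omega)]
    simp [c2]
  · rw [altsC, erz hxy hxz hyz, Finset.filter_insert, if_neg (by rw [m6]; omega),
      Finset.filter_singleton, if_pos (by rw [m3]; omega), Finset.sum_singleton, c3]

private lemma Tb5 (hxy : x ≠ y) (hxz : x ≠ z) (hyz : y ≠ z) :
    Tb (P5 x y z) = {x, y} := by
  obtain ⟨q1, q2, q3⟩ := qsup5 hxy hxz hyz
  unfold Tb
  rw [alts5, Finset.filter_insert, if_pos (by rw [q1]; decide),
    Finset.filter_insert, if_pos (by rw [q2]; decide),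
    Finset.filter_singleton, if_neg (by rw [q3]; decide)]
  simp

private lemma TbC (hxy : x ≠ y) (hxz : x ≠ z) (hyz : y ≠ z) :
    Tb ((P5 x y z).combine (QB x y z)) = {z} := by
  obtain ⟨q1, q2, q3⟩ := qsupC hxy hxz hyz
  unfold Tb
  rw [altsC, Finset.filter_insert, if_neg (by rw [q1]; decide),
    Finset.filter_insert, if_neg (by rw [q2]; decide),
    Finset.filter_singleton, if_pos (by rw [q3]; decide)]

private lemma Fd5 (hxy : x ≠ y) (hxz : x ≠ z) (hyz : y ≠ z) :
    Fd (P5 x y z) = {x, y} := by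
  unfold Fd
  rw [if_pos (inS5 hxy hxz hyz), Tb5 hxy hxz hyz,
    if_pos (by exact ⟨x, by simp⟩)]

private lemma FdC (hxy : x ≠ y) (hxz : x ≠ z) (hyz : y ≠ z) :
    Fd ((P5 x y z).combine (QB x y z)) = {z} := by
  unfold Fd
  rw [if_pos (inSC hxy hxz hyz), TbC hxy hxz hyz,
    if_pos (by exact ⟨z, by simp⟩)]

private lemma P5dom (hxy : x ≠ y) (hxz : x ≠ z) (hyz : y ≠ z) :
    P5 x y z ∈ Dom23 α :=
  ⟨isSWO_relOf, ⟨0, Finset.mem_insert_self _ _⟩, Or.inr (card_triple hxy hxz hyz)⟩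

private lemma QBdom (hxy : x ≠ y) (hxz : x ≠ z) (hyz : y ≠ z) :
    QB x y z ∈ Dom23 α :=
  ⟨isSWO_relOf, ⟨5, Finset.mem_insert_self _ _⟩, Or.inr (card_triple hxy hxz hyz)⟩

private lemma linear_rk3 (hxy : x ≠ y) (hxz : x ≠ z) (hyz : y ≠ z) {p q r : ℕ}
    (hpq : p ≠ q) (hpr : p ≠ r) (hqr : q ≠ r) :
    IsLinearOn (fun a b => decide (rk3 x y z p q r b < rk3 x y z p q r a))
      ({x, y, z} : Finset α) := by
  refine ⟨?_, ?_, ?_, ?_⟩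
  · intro a _; simp
  · intro a _ b _ c _ h1 h2
    simp only [decide_eq_true_eq] at h1 h2 ⊢
    omega
  · intro a ha b hb hab
    have hne : rk3 x y z p q r a ≠ rk3 x y z p q r b := by
      rcases mem_of_mem_triple ha with rfl | rfl | rfl <;>
        rcases mem_of_mem_triple hb with rfl | rfl | rfl <;>
        first
          | exact absurd rfl hab
          | simp [rk3, hxy, hxz, hyz, Ne.symm hxy, Ne.symm hxz, Ne.symm hyz,
              hpq, hpr, hqr, Ne.symm hpq, Ne.symm hpr, Ne.symm hqr]
    simp only [decide_eq_true_eq]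
    omega
  · intro a _ b _ h
    simp only [decide_eq_true_eq] at h
    simp only [decide_eq_false_iff_not]
    omega

private lemma QBblock (hxy : x ≠ y) (hxz : x ≠ z) (hyz : y ≠ z) :
    IsBlock ({x, y, z} : Finset α) (QB x y z) := by
  have hx : x ∈ ({x, y, z} : Finset α) := by simp
  have hy : y ∈ ({x, y, z} : Finset α) := by simp
  have hz : z ∈ ({x, y, z} : Finset α) := by simp
  refine ⟨rfl, ?_, ?_⟩
  · intro i hi
    have hmem : i = 5 ∨ i = 6 ∨ i = 7 ∨ i = 8 ∨ i = 9 ∨ i = 10 := by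
      simpa [QB] using hi
    rcases hmem with rfl | rfl | rfl | rfl | rfl | rfl
    · exact linear_rk3 hxy hxz hyz (by decide) (by decide) (by decide)
    · exact linear_rk3 hxy hxz hyz (by decide) (by decide) (by decide)
    · exact linear_rk3 hxy hxz hyz (by decide) (by decide) (by decide)
    · exact linear_rk3 hxy hxz hyz (by decide) (by decide) (by decide)
    · exact linear_rk3 hxy hxz hyz (by decide) (by decide) (by decide)
    · exact linear_rk3 hxy hxz hyz (by decide) (by decide) (by decide)
  · intro r hr
    obtain ⟨hirr, htrans, htot, hasym⟩ := hr
    have d1 := hirr x hx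
    have d2 := hirr y hy
    have d3 := hirr z hz
    rcases htot x hx y hy hxy with b1 | b1 <;>
      rcases htot x hx z hz hxz with b2 | b2 <;>
      rcases htot y hy z hz hyz with b3 | b3
    · have n1 := hasym x hx y hy b1
      have n2 := hasym x hx z hz b2
      have n3 := hasym y hy z hz b3
      refine ⟨5, ⟨by simp [QB], ?_⟩, ?_⟩
      · intro a ha b hb
        rcases mem_of_mem_triple ha with rfl | rfl | rfl <;>
          rcases mem_of_mem_triple hb with rfl | rfl | rfl <;>
          simp [QB, relOf, ρB, rk3, hxy, hxz, hyz, Ne.symm hxy, Ne.symm hxz, Ne.symm hyz, b1, b2, b3, n1, n2, n3, d1, d2, d3]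
      · rintro w ⟨hwmem, hwm⟩
        have u1 := hwm x hx y hy
        have u2 := hwm x hx z hz
        have u3 := hwm y hy z hz
        have hwc : w = 5 ∨ w = 6 ∨ w = 7 ∨ w = 8 ∨ w = 9 ∨ w = 10 := by
          simpa [QB] using hwmem
        rcases hwc with rfl | rfl | rfl | rfl | rfl | rfl <;>
          first
            | rfl
            | simp [QB, relOf, ρB, rk3, hxy, hxz, hyz, Ne.symm hxy, Ne.symm hxz, Ne.symm hyz, b1, b2, b3, n1, n2, n3] at u1 u2 u3
    · have n1 := hasym x hx y hy b1
      have n2 := hasym x hx z hz b2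
      have n3 := hasym z hz y hy b3
      refine ⟨6, ⟨by simp [QB], ?_⟩, ?_⟩
      · intro a ha b hb
        rcases mem_of_mem_triple ha with rfl | rfl | rfl <;>
          rcases mem_of_mem_triple hb with rfl | rfl | rfl <;>
          simp [QB, relOf, ρB, rk3, hxy, hxz, hyz, Ne.symm hxy, Ne.symm hxz, Ne.symm hyz, b1, b2, b3, n1, n2, n3, d1, d2, d3]
      · rintro w ⟨hwmem, hwm⟩
        have u1 := hwm x hx y hy
        have u2 := hwm x hx z hz
        have u3 := hwm y hy z hz
        have hwc : w = 5 ∨ w = 6 ∨ w = 7 ∨ w = 8 ∨ w = 9 ∨ w = 10 := by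
          simpa [QB] using hwmem
        rcases hwc with rfl | rfl | rfl | rfl | rfl | rfl <;>
          first
            | rfl
            | simp [QB, relOf, ρB, rk3, hxy, hxz, hyz, Ne.symm hxy, Ne.symm hxz, Ne.symm hyz, b1, b2, b3, n1, n2, n3] at u1 u2 u3
    · exfalso
      have h := htrans x hx y hy z hz b1 b3
      have n := hasym z hz x hx b2
      simp [h] at n
    · have n1 := hasym x hx y hy b1
      have n2 := hasym z hz x hx b2
      have n3 := hasym z hz y hy b3
      refine ⟨9, ⟨by simp [QB], ?_⟩, ?_⟩
      · intro a ha b hb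
        rcases mem_of_mem_triple ha with rfl | rfl | rfl <;>
          rcases mem_of_mem_triple hb with rfl | rfl | rfl <;>
          simp [QB, relOf, ρB, rk3, hxy, hxz, hyz, Ne.symm hxy, Ne.symm hxz, Ne.symm hyz, b1, b2, b3, n1, n2, n3, d1, d2, d3]
      · rintro w ⟨hwmem, hwm⟩
        have u1 := hwm x hx y hy
        have u2 := hwm x hx z hz
        have u3 := hwm y hy z hz
        have hwc : w = 5 ∨ w = 6 ∨ w = 7 ∨ w = 8 ∨ w = 9 ∨ w = 10 := by
          simpa [QB] using hwmem
        rcases hwc with rfl | rfl | rfl | rfl | rfl | rfl <;>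
          first
            | rfl
            | simp [QB, relOf, ρB, rk3, hxy, hxz, hyz, Ne.symm hxy, Ne.symm hxz, Ne.symm hyz, b1, b2, b3, n1, n2, n3] at u1 u2 u3
    · have n1 := hasym y hy x hx b1
      have n2 := hasym x hx z hz b2
      have n3 := hasym y hy z hz b3
      refine ⟨7, ⟨by simp [QB], ?_⟩, ?_⟩
      · intro a ha b hb
        rcases mem_of_mem_triple ha with rfl | rfl | rfl <;>
          rcases mem_of_mem_triple hb with rfl | rfl | rfl <;>
          simp [QB, relOf, ρB, rk3, hxy, hxz, hyz, Ne.symm hxy, Ne.symm hxz, Ne.symm hyz, b1, b2, b3, n1, n2, n3, d1, d2, d3]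
      · rintro w ⟨hwmem, hwm⟩
        have u1 := hwm x hx y hy
        have u2 := hwm x hx z hz
        have u3 := hwm y hy z hz
        have hwc : w = 5 ∨ w = 6 ∨ w = 7 ∨ w = 8 ∨ w = 9 ∨ w = 10 := by
          simpa [QB] using hwmem
        rcases hwc with rfl | rfl | rfl | rfl | rfl | rfl <;>
          first
            | rfl
            | simp [QB, relOf, ρB, rk3, hxy, hxz, hyz, Ne.symm hxy, Ne.symm hxz, Ne.symm hyz, b1, b2, b3, n1, n2, n3] at u1 u2 u3
    · exfalso
      have h := htrans y hy x hx z hz b1 b2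
      have n := hasym z hz y hy b3
      simp [h] at n
    · have n1 := hasym y hy x hx b1
      have n2 := hasym z hz x hx b2
      have n3 := hasym y hy z hz b3
      refine ⟨8, ⟨by simp [QB], ?_⟩, ?_⟩
      · intro a ha b hb
        rcases mem_of_mem_triple ha with rfl | rfl | rfl <;>
          rcases mem_of_mem_triple hb with rfl | rfl | rfl <;>
          simp [QB, relOf, ρB, rk3, hxy, hxz, hyz, Ne.symm hxy, Ne.symm hxz, Ne.symm hyz, b1, b2, b3, n1, n2, n3, d1, d2, d3]
      · rintro w ⟨hwmem, hwm⟩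
        have u1 := hwm x hx y hy
        have u2 := hwm x hx z hz
        have u3 := hwm y hy z hz
        have hwc : w = 5 ∨ w = 6 ∨ w = 7 ∨ w = 8 ∨ w = 9 ∨ w = 10 := by
          simpa [QB] using hwmem
        rcases hwc with rfl | rfl | rfl | rfl | rfl | rfl <;>
          first
            | rfl
            | simp [QB, relOf, ρB, rk3, hxy, hxz, hyz, Ne.symm hxy, Ne.symm hxz, Ne.symm hyz, b1, b2, b3, n1, n2, n3] at u1 u2 u3
    · have n1 := hasym y hy x hx b1
      have n2 := hasym z hz x hx b2
      have n3 := hasym z hz y hy b3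
      refine ⟨10, ⟨by simp [QB], ?_⟩, ?_⟩
      · intro a ha b hb
        rcases mem_of_mem_triple ha with rfl | rfl | rfl <;>
          rcases mem_of_mem_triple hb with rfl | rfl | rfl <;>
          simp [QB, relOf, ρB, rk3, hxy, hxz, hyz, Ne.symm hxy, Ne.symm hxz, Ne.symm hyz, b1, b2, b3, n1, n2, n3, d1, d2, d3]
      · rintro w ⟨hwmem, hwm⟩
        have u1 := hwm x hx y hy
        have u2 := hwm x hx z hz
        have u3 := hwm y hy z hz
        have hwc : w = 5 ∨ w = 6 ∨ w = 7 ∨ w = 8 ∨ w = 9 ∨ w = 10 := by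
          simpa [QB] using hwmem
        rcases hwc with rfl | rfl | rfl | rfl | rfl | rfl <;>
          first
            | rfl
            | simp [QB, relOf, ρB, rk3, hxy, hxz, hyz, Ne.symm hxy, Ne.symm hxz, Ne.symm hyz, b1, b2, b3, n1, n2, n3] at u1 u2 u3

end Compute



end Aux

/-- Independence of block preservation: there is a voting method on the domain
of profiles with two or three alternatives satisfying all of the axioms of the
main theorem except block preservation, which it violates, and which differs
from Minimax on some profile. -/
theorem block_preservation_is_independent {α : Type*} [DecidableEq α]
    (hX : ∃ x y z : α, x ≠ y ∧ x ≠ z ∧ y ≠ z) :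
    ∃ F : Profile α → Finset α,
      (∀ P ∈ Dom23 α, (F P).Nonempty ∧ F P ⊆ P.alts) ∧
      Anonymity (Dom23 α) F ∧
      Neutrality (Dom23 α) F ∧
      WeakPositiveResponsiveness (Dom23 α) F ∧
      PositiveInvolvement (Dom23 α) F ∧
      NearImmunityToSpoilers (Dom23 α) F ∧
      Homogeneity (Dom23 α) F ∧
      ¬ BlockPreservation (Dom23 α) F ∧
      ∃ P ∈ Dom23 α, F P ≠ Minimax P := by
  obtain ⟨x, y, z, hxy, hxz, hyz⟩ := hX
  refine ⟨Fd, ?_, Fd_anon, Fd_neut, Fd_wpr, Fd_pi, Fd_nis, Fd_homog, ?_, ?_⟩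
  · intro P hP
    obtain ⟨hswo, hvne, hcard⟩ := hP
    exact ⟨Fd_nonempty (Finset.card_pos.mp (by omega)), Fd_subset_alts P⟩
  · intro hBP
    obtain ⟨_, hsub⟩ := hBP (P5 x y z) (P5dom hxy hxz hyz) (QB x y z) (QBdom hxy hxz hyz)
      disj5B (QBblock hxy hxz hyz)
    have hxF : x ∈ Fd (P5 x y z) := by rw [Fd5 hxy hxz hyz]; simp
    have hmem := hsub hxF
    rw [FdC hxy hxz hyz] at hmem
    simp at hmem
    exact hxz hmem
  · refine ⟨P5 x y z, P5dom hxy hxz hyz, ?_⟩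
    rw [Fd5 hxy hxz hyz, minimax_of_inS (inS5 hxy hxz hyz), alts5]
    intro h
    have hzm : z ∈ ({x, y} : Finset α) := by rw [h]; simp
    simp [Ne.symm hxz, Ne.symm hyz] at hzm

end MayMinimax
end

section
/- The Minimax MB voting method satisfies immunity to spoilers on three-alternative profiles with no zero margins between distinct alternatives: for any profile P with |X(P)| = 3 such that Margin_P(x,y) ≠ 0 for all distinct x,y ∈ X(P), and any a,b ∈ X(P), if a ∈ MinimaxMB(P_{-b}) and MinimaxMB(P|{a,b}) = {a}, then a ∈ MinimaxMB(P). -/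
/-!
Formalization of notions from "An extension of May's Theorem to three
alternatives: axiomatizing Minimax voting" by Holliday and Pacuit.

The set of voters is the countably infinite set `ℕ`; the set `α` of
alternatives is a type (assumed to have at least three elements where the
paper assumes `|𝒳| ≥ 3`).
-/

namespace MayMinimax

variable {α : Type*} [DecidableEq α]

set_option linter.unusedSectionVars false in
lemma margin_anti (P : Profile α) (x y : α) : Margin P y x = - Margin P x y := by
  unfold Margin; ring

lemma margin_restrict_s19 (P : Profile α) (Y : Finset α) {x y : α}
    (hx : x ∈ Y) (hy : y ∈ Y) : Margin (P.restrict Y) x y = Margin P x y := by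
  unfold Margin Profile.restrict
  simp [hx, hy]

lemma mmscore_singleton (P : Profile α) {x y : α} (h : P.alts.erase x = {y}) :
    MMScore P x = Margin P y x := by
  unfold MMScore
  rw [h]
  simp

lemma le_mmscore_s19 (P : Profile α) {x y : α} (h : y ∈ P.alts.erase x) :
    Margin P y x ≤ MMScore P x := by
  unfold MMScore
  have hmem : Margin P y x ∈ (P.alts.erase x).image fun b => Margin P b x :=
    Finset.mem_image_of_mem _ h
  have hle := Finset.le_max hmem
  cases hmax : ((P.alts.erase x).image fun b => Margin P b x).max with
  | bot => rw [hmax] at hle; exact absurd hle (by simp)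
  | coe m =>
    rw [hmax] at hle
    simpa using hle

lemma mmscore_le (P : Profile α) {x : α} {m : ℤ}
    (hm : 0 ≤ m ∨ (P.alts.erase x).Nonempty)
    (h : ∀ y ∈ P.alts.erase x, Margin P y x ≤ m) : MMScore P x ≤ m := by
  unfold MMScore
  cases hmax : ((P.alts.erase x).image fun b => Margin P b x).max with
  | bot =>
    rcases hm with hm | ⟨y, hy⟩
    · simpa using hm
    · exfalso
      have : Margin P y x ∈ (P.alts.erase x).image fun b => Margin P b x :=
        Finset.mem_image_of_mem _ hy
      have := Finset.le_max this
      rw [hmax] at this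
      exact absurd this (by simp)
  | coe v =>
    have hv : v ∈ (P.alts.erase x).image fun b => Margin P b x :=
      Finset.mem_of_max hmax
    obtain ⟨y, hy, rfl⟩ := Finset.mem_image.mp hv
    simpa using h y hy


/-- Minimax MB satisfies immunity to spoilers on three-alternative profiles
with no zero margins between distinct alternatives. -/
theorem minimaxMB_immunity_no_zero_margins {α : Type*} [DecidableEq α]
    (hX : ∃ x y z : α, x ≠ y ∧ x ≠ z ∧ y ≠ z) :
    ∀ P : Profile α, IsSWO P → P.voters.Nonempty → P.alts.card = 3 →
      (∀ x ∈ P.alts, ∀ y ∈ P.alts, x ≠ y → Margin P x y ≠ 0) →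
      ∀ a ∈ P.alts, ∀ b ∈ P.alts,
        a ∈ MinimaxMB (P.minus b) → MinimaxMB (P.restrict {a, b}) = {a} →
        a ∈ MinimaxMB P := by
  intro P _hswo _hV hcard hnz a ha b hb hmin hrestr
  -- a is in the alternatives of P.minus b, so a ≠ b
  have haMm : a ∈ Minimax (P.minus b) := (Finset.mem_filter.mp hmin).1
  have haMm' := Finset.mem_filter.mp haMm
  have haerase : a ∈ P.alts.erase b := haMm'.1
  have hab : a ≠ b := (Finset.mem_erase.mp haerase).1
  -- third alternative c
  have hsub : ({a, b} : Finset α) ⊆ P.alts := by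
    intro x hx
    rcases Finset.mem_insert.mp hx with rfl | hx
    · exact ha
    · rw [Finset.mem_singleton.mp hx]; exact hb
  have hcard2 : ({a, b} : Finset α).card = 2 := by
    rw [Finset.card_insert_of_notMem (by simpa using hab), Finset.card_singleton]
  have hss : ({a, b} : Finset α) ⊂ P.alts :=
    hsub.ssubset_of_ne (by
      intro h; rw [← h, hcard2] at hcard; omega)
  obtain ⟨c, hc, hcnot⟩ := Finset.exists_of_ssubset hss
  have hca : c ≠ a := fun h => hcnot (by simp [h])
  have hcb : c ≠ b := fun h => hcnot (by simp [h])
  have halts : P.alts = {a, b, c} := by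
    refine (Finset.eq_of_subset_of_card_le ?_ ?_).symm
    · intro x hx
      rcases Finset.mem_insert.mp hx with rfl | hx
      · exact ha
      rcases Finset.mem_insert.mp hx with rfl | hx
      · exact hb
      · rw [Finset.mem_singleton.mp hx]; exact hc
    · rw [hcard]
      rw [Finset.card_insert_of_notMem (by simp [hab, hca.symm]),
        Finset.card_insert_of_notMem (by simp [hcb.symm]), Finset.card_singleton]
  -- Step 1: Margin P a b > 0 from the {a,b} restriction
  have hP2alts : (P.restrict {a, b}).alts = {a, b} := rfl
  have haP2 : a ∈ MinimaxMB (P.restrict {a, b}) := by rw [hrestr]; simp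
  have haP2' := Finset.mem_filter.mp (Finset.mem_filter.mp haP2).1
  have hs1 : MMScore (P.restrict {a, b}) a ≤ MMScore (P.restrict {a, b}) b :=
    haP2'.2 b (by rw [hP2alts]; simp)
  have hea : ((P.restrict {a, b}).alts).erase a = {b} := by
    rw [hP2alts]
    exact Finset.erase_insert (by simpa using hab)
  have heb : ((P.restrict {a, b}).alts).erase b = {a} := by
    rw [hP2alts, Finset.pair_comm]
    exact Finset.erase_insert (by simpa using hab.symm)
  rw [mmscore_singleton _ hea, mmscore_singleton _ heb,
    margin_restrict_s19 P _ (by simp) (by simp),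
    margin_restrict_s19 P _ (by simp) (by simp)] at hs1
  have hmab : 0 < Margin P a b := by
    rcases lt_or_ge 0 (Margin P a b) with h | h
    · exact h
    · exfalso
      have hne := hnz a ha b hb hab
      rw [margin_anti] at hs1
      omega
  -- Step 2: Margin P a c > 0 from P.minus b
  have hPmalts : (P.minus b).alts = P.alts.erase b := rfl
  have herb : P.alts.erase b = {a, c} := by
    rw [halts]
    ext x
    simp only [Finset.mem_erase, Finset.mem_insert, Finset.mem_singleton]
    constructor
    · rintro ⟨hx, rfl | rfl | rfl⟩
      · exact Or.inl rfl
      · exact absurd rfl hx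
      · exact Or.inr rfl
    · rintro (rfl | rfl)
      · exact ⟨hab, Or.inl rfl⟩
      · exact ⟨hcb, Or.inr (Or.inr rfl)⟩
  have hs2 : MMScore (P.minus b) a ≤ MMScore (P.minus b) c :=
    haMm'.2 c (by rw [hPmalts, herb]; simp)
  have hea2 : ((P.minus b).alts).erase a = {c} := by
    rw [hPmalts, herb]
    exact Finset.erase_insert (by simpa using hca.symm)
  have hec2 : ((P.minus b).alts).erase c = {a} := by
    rw [hPmalts, herb, Finset.pair_comm]
    exact Finset.erase_insert (by simpa using hca)
  have haY : a ∈ P.alts.erase b := haerase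
  have hcY : c ∈ P.alts.erase b := by rw [herb]; simp
  rw [mmscore_singleton _ hea2, mmscore_singleton _ hec2] at hs2
  simp only [Profile.minus] at hs2
  rw [margin_restrict_s19 P _ hcY haY, margin_restrict_s19 P _ haY hcY] at hs2
  have hmac : 0 < Margin P a c := by
    have hne := hnz a ha c hc hca.symm
    rw [margin_anti] at hs2
    omega
  -- Now a is Condorcet winner; Minimax P = {a}
  have herasea : P.alts.erase a = {b, c} := by
    rw [halts]
    ext x
    simp only [Finset.mem_erase, Finset.mem_insert, Finset.mem_singleton]
    constructor
    · rintro ⟨hx, rfl | rfl | rfl⟩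
      · exact absurd rfl hx
      · exact Or.inl rfl
      · exact Or.inr rfl
    · rintro (rfl | rfl)
      · exact ⟨hab.symm, Or.inr (Or.inl rfl)⟩
      · exact ⟨hca, Or.inr (Or.inr rfl)⟩
  have hscorea : MMScore P a ≤ -1 := by
    apply mmscore_le
    · right; rw [herasea]; exact ⟨b, by simp⟩
    · intro y hy
      rw [herasea] at hy
      rcases Finset.mem_insert.mp hy with rfl | hy
      · rw [margin_anti]; omega
      · rw [Finset.mem_singleton.mp hy, margin_anti]; omega
  have hscoreb : 1 ≤ MMScore P b := by
    have := le_mmscore_s19 P (x := b) (y := a) (by rw [Finset.mem_erase]; exact ⟨hab, ha⟩)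
    omega
  have hscorec : 1 ≤ MMScore P c := by
    have := le_mmscore_s19 P (x := c) (y := a) (by rw [Finset.mem_erase]; exact ⟨hca.symm, ha⟩)
    omega
  -- conclude
  refine Finset.mem_filter.mpr ⟨?_, ?_⟩
  · refine Finset.mem_filter.mpr ⟨ha, ?_⟩
    intro x hx
    rw [halts] at hx
    rcases Finset.mem_insert.mp hx with rfl | hx
    · exact le_refl _
    rcases Finset.mem_insert.mp hx with rfl | hx
    · omega
    · rw [Finset.mem_singleton.mp hx]; omega
  · intro x hx
    have hx' := Finset.mem_filter.mp hx
    have hxa : x = a := by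
      by_contra hne
      have hle : MMScore P x ≤ MMScore P a := hx'.2 a ha
      have hx3 : x ∈ P.alts := hx'.1
      rw [halts] at hx3
      rcases Finset.mem_insert.mp hx3 with rfl | hx3
      · exact hne rfl
      rcases Finset.mem_insert.mp hx3 with rfl | hx3
      · omega
      · rw [Finset.mem_singleton.mp hx3] at hle; omega
    rw [hxa]


end MayMinimax
end
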